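/- arXiv:1910.10412 — 13 statements merged into one kernel-verified Lean document; each statement's English description precedes it below -/
import Mathlib

section
/- If G is a finite connected Helly graph, then 2·rad(G) ≥ diam(G) ≥ 2·rad(G) − 1; in particular, rad(G) = ⌈diam(G)/2⌉. -/
open SimpleGraph

variable {V : Type*}

/-- The ball of radius `r` centered at `v`. -/
def gBall (G : SimpleGraph V) (v : V) (r : ℕ) : Set V := {u | G.dist v u ≤ r}

/-- A graph is Helly if every (nonempty) family of pairwise intersecting balls
has a nonempty common intersection. -/
def IsHelly (G : SimpleGraph V) : Prop :=
  ∀ F : Set (V × ℕ), F.Nonempty →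
    (∀ p ∈ F, ∀ q ∈ F, (gBall G p.1 p.2 ∩ gBall G q.1 q.2).Nonempty) →
    (⋂ p ∈ F, gBall G p.1 p.2).Nonempty

/-- The eccentricity of a vertex. -/
noncomputable def ecc (G : SimpleGraph V) [Fintype V] (v : V) : ℕ :=
  Finset.univ.sup (fun u => G.dist v u)

/-- The radius of a graph. -/
noncomputable def grad (G : SimpleGraph V) [Fintype V] : ℕ :=
  sInf (Set.range (ecc G))

/-- The diameter of a graph. -/
noncomputable def gdiam (G : SimpleGraph V) [Fintype V] : ℕ :=
  Finset.univ.sup (ecc G)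

/-- The center of a graph: vertices of minimum eccentricity. -/
noncomputable def gcenter (G : SimpleGraph V) [Fintype V] : Set V :=
  {v | ecc G v = grad G}

/-- Distance from a vertex to a set of vertices. -/
noncomputable def distS (G : SimpleGraph V) (v : V) (S : Set V) : ℕ :=
  sInf (G.dist v '' S)

/-- The metric projection of a vertex onto a set of vertices. -/
noncomputable def proj (G : SimpleGraph V) (v : V) (S : Set V) : Set V :=
  {s ∈ S | G.dist v s = distS G v S}

/-- The slice `L(u,k,v)`: vertices on the metric interval from `u` to `v`
at distance `k` from `u`. -/
def gslice (G : SimpleGraph V) (u : V) (k : ℕ) (v : V) : Set V :=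
  {w | G.dist u w = k ∧ G.dist u w + G.dist w v = G.dist u v}

/-- A graph is `C₄`-free if it has no induced cycle on four vertices. -/
def C4Free (G : SimpleGraph V) : Prop :=
  ¬ ∃ a b c d : V, a ≠ b ∧ a ≠ c ∧ a ≠ d ∧ b ≠ c ∧ b ≠ d ∧ c ≠ d ∧
    G.Adj a b ∧ G.Adj b c ∧ G.Adj c d ∧ G.Adj d a ∧ ¬ G.Adj a c ∧ ¬ G.Adj b d

/-- The open neighbourhood of a set: vertices outside it with a neighbour in it. -/
def nbhdSet (G : SimpleGraph V) (C : Set V) : Set V :=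
  {v | v ∉ C ∧ ∃ c ∈ C, G.Adj v c}

lemma midpoint_aux (G : SimpleGraph V) (hconn : G.Connected) :
    ∀ {u v : V} (p : G.Walk u v) (m : ℕ),
      ∃ w, G.dist u w ≤ m ∧ G.dist w v ≤ p.length - m := by
  intro u v p
  induction p with
  | @nil x => exact fun m => ⟨x, by simp [SimpleGraph.dist_self], by simp [SimpleGraph.dist_self]⟩
  | @cons a b c h q ih =>
    intro m
    match m with
    | 0 =>
      refine ⟨a, by simp, ?_⟩
      simpa using SimpleGraph.dist_le (SimpleGraph.Walk.cons h q)
    | (m' + 1) =>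
      obtain ⟨w, hw1, hw2⟩ := ih m'
      refine ⟨w, ?_, ?_⟩
      · calc G.dist a w ≤ G.dist a b + G.dist b w := hconn.dist_triangle
          _ ≤ 1 + m' := by
              have : G.dist a b ≤ 1 := by simpa using SimpleGraph.dist_le h.toWalk
              omega
          _ = m' + 1 := by omega
      · simpa [SimpleGraph.Walk.length_cons, Nat.succ_sub_succ] using hw2

/-- In a finite connected Helly graph,
`2·rad(G) ≥ diam(G) ≥ 2·rad(G) − 1` and `rad(G) = ⌈diam(G)/2⌉`. -/
theorem stmt0 (G : SimpleGraph V) [Fintype V] (hconn : G.Connected) (hH : IsHelly G) :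
    2 * grad G ≥ gdiam G ∧ gdiam G ≥ 2 * grad G - 1 ∧ grad G = (gdiam G + 1) / 2 := by
  haveI : Nonempty V := hconn.nonempty
  -- basic facts
  have hdist_le_ecc : ∀ v u : V, G.dist v u ≤ ecc G v := fun v u =>
    Finset.le_sup (f := fun u => G.dist v u) (Finset.mem_univ u)
  have hecc_le_diam : ∀ v : V, ecc G v ≤ gdiam G := fun v =>
    Finset.le_sup (Finset.mem_univ v)
  have hrad_le_ecc : ∀ v : V, grad G ≤ ecc G v := fun v =>
    Nat.sInf_le ⟨v, rfl⟩
  -- 1) diam ≤ 2 * rad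
  obtain ⟨c, hc⟩ : ∃ c : V, ecc G c = grad G := by
    have : (Set.range (ecc G)).Nonempty := Set.range_nonempty _
    obtain ⟨c, hc⟩ := Nat.sInf_mem this
    exact ⟨c, hc⟩
  have h1 : gdiam G ≤ 2 * grad G := by
    apply Finset.sup_le
    intro v _
    apply Finset.sup_le
    intro u _
    calc G.dist v u ≤ G.dist v c + G.dist c u := hconn.dist_triangle
      _ ≤ ecc G c + ecc G c := by
          have h1 := hdist_le_ecc c v
          have h2 := hdist_le_ecc c u
          have h3 : G.dist v c = G.dist c v := SimpleGraph.dist_comm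
          omega
      _ = 2 * grad G := by rw [hc]; ring
  -- 2) rad ≤ (diam + 1) / 2, via Helly
  set k := (gdiam G + 1) / 2 with hk
  have h2 : grad G ≤ k := by
    have hF : (⋂ p ∈ (Set.univ.prod {k} : Set (V × ℕ)), gBall G p.1 p.2).Nonempty := by
      apply hH
      · exact ⟨(Classical.arbitrary V, k), Set.mem_prod.mpr ⟨Set.mem_univ _, rfl⟩⟩
      · rintro ⟨u, r⟩ hu ⟨v, s⟩ hv
        have hu2 : r = k := hu.2
        have hv2 : s = k := hv.2
        subst hu2; subst hv2
        have hd : G.dist u v ≤ 2 * k := by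
          have := hecc_le_diam u
          have := hdist_le_ecc u v
          omega
        obtain ⟨p, hp⟩ := hconn.exists_walk_length_eq_dist u v
        obtain ⟨w, hw1, hw2⟩ := midpoint_aux G hconn p (G.dist u v - k)
        refine ⟨w, hw1.trans (by omega), ?_⟩
        show G.dist v w ≤ k
        have h3 : G.dist v w = G.dist w v := SimpleGraph.dist_comm
        rw [h3]
        calc G.dist w v ≤ p.length - (G.dist u v - k) := hw2
          _ ≤ k := by omega
    obtain ⟨w, hw⟩ := hF
    refine le_trans (hrad_le_ecc w) ?_
    apply Finset.sup_le
    intro u _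
    have : w ∈ gBall G u k := by
      have := Set.mem_iInter₂.mp hw (u, k) (Set.mem_prod.mpr ⟨Set.mem_univ _, rfl⟩)
      exact this
    have h3 : G.dist u w = G.dist w u := SimpleGraph.dist_comm
    exact h3 ▸ this
  refine ⟨h1, ?_, ?_⟩
  · omega
  · omega
end

section
/- Let G be a finite connected Helly graph. Then for any vertex v of G and any farthest vertex u ∈ F(v), the slice L(u, rad(G), v) has nonempty intersection with the center C(G), i.e., L(u, rad(G), v) ∩ C(G) ≠ ∅. -/
open SimpleGraph

variable {V : Type*}

private lemma walk_getVert_bounds {G : SimpleGraph V} (hconn : G.Connected)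
    {v x : V} (p : G.Walk v x) (k : ℕ) :
    G.dist v (p.getVert k) ≤ k ∧ G.dist (p.getVert k) x ≤ p.length - k := by
  induction p generalizing k with
  | nil =>
    rw [SimpleGraph.Walk.getVert_of_length_le _ (by simp : SimpleGraph.Walk.nil.length ≤ k)]
    simp [SimpleGraph.dist_self]
  | @cons a b c h q ih =>
    cases k with
    | zero =>
      constructor
      · simp
      · simpa using SimpleGraph.dist_le (SimpleGraph.Walk.cons h q)
    | succ k =>
      have hgv : (SimpleGraph.Walk.cons h q).getVert (k + 1) = q.getVert k :=
        SimpleGraph.Walk.getVert_cons_succ q h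
      obtain ⟨h1, h2⟩ := ih k
      rw [hgv]
      constructor
      · calc G.dist a (q.getVert k) ≤ G.dist a b + G.dist b (q.getVert k) :=
              hconn.dist_triangle
          _ ≤ 1 + k := by
              have : G.dist a b ≤ 1 := by
                simpa using SimpleGraph.dist_le h.toWalk
              omega
          _ = k + 1 := by omega
      · simpa [SimpleGraph.Walk.length_cons] using h2

private lemma existsBetweenAux {G : SimpleGraph V} (hconn : G.Connected)
    (v x : V) (k : ℕ) :
    ∃ z : V, G.dist v z ≤ min k (G.dist v x) ∧
      G.dist z x ≤ G.dist v x - min k (G.dist v x) := by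
  obtain ⟨p, hp⟩ := hconn.exists_walk_length_eq_dist v x
  refine ⟨p.getVert (min k (G.dist v x)), ?_, ?_⟩
  · exact (walk_getVert_bounds hconn p _).1
  · have := (walk_getVert_bounds hconn p (min k (G.dist v x))).2
    omega

/-- In a finite connected Helly graph, for any vertex `v` and any
farthest vertex `u ∈ F(v)`, the slice `L(u, rad(G), v)` intersects the center. -/
theorem stmt1 (G : SimpleGraph V) [Fintype V] (hconn : G.Connected) (hH : IsHelly G)
    (v u : V) (hu : G.dist u v = ecc G v) :
    (gslice G u (grad G) v ∩ gcenter G).Nonempty := by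
  classical
  have hne : Nonempty V := ⟨v⟩
  -- the radius is attained at some center vertex c
  have hradmem : grad G ∈ Set.range (ecc G) :=
    Nat.sInf_mem (Set.range_nonempty _)
  obtain ⟨c, hc⟩ := hradmem
  have hrad_le : ∀ x : V, grad G ≤ ecc G x := fun x => Nat.sInf_le ⟨x, rfl⟩
  have hdist_le_ecc : ∀ x y : V, G.dist x y ≤ ecc G x := fun x y =>
    Finset.le_sup (Finset.mem_univ y)
  set r := grad G with hr
  set e := ecc G v with he
  have hre : r ≤ e := hrad_le v
  -- the family of balls
  set F : Set (V × ℕ) := ((fun x => (x, r)) '' Set.univ) ∪ {(v, e - r)} with hF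
  have hFne : F.Nonempty := ⟨(v, e - r), Or.inr rfl⟩
  -- key pairwise intersection facts
  have hcent : ∀ x : V, c ∈ gBall G x r := by
    intro x
    have : G.dist c x ≤ r := hc ▸ hdist_le_ecc c x
    simpa [gBall, SimpleGraph.dist_comm] using this
  have hmix : ∀ x : V, (gBall G x r ∩ gBall G v (e - r)).Nonempty := by
    intro x
    obtain ⟨z, hz1, hz2⟩ := existsBetweenAux hconn v x (e - r)
    refine ⟨z, ?_, ?_⟩
    · have hxv : G.dist v x ≤ e := hdist_le_ecc v x
      have : G.dist z x ≤ r := by omega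
      simpa [gBall, SimpleGraph.dist_comm] using this
    · simp only [gBall, Set.mem_setOf_eq]
      omega
  have hpair : ∀ p ∈ F, ∀ q ∈ F, (gBall G p.1 p.2 ∩ gBall G q.1 q.2).Nonempty := by
    rintro p hp q hq
    rcases hp with ⟨x, -, rfl⟩ | hp
    · rcases hq with ⟨y, -, rfl⟩ | hq
      · exact ⟨c, hcent x, hcent y⟩
      · rcases Set.mem_singleton_iff.mp hq
        exact hmix x
    · rcases Set.mem_singleton_iff.mp hp
      rcases hq with ⟨y, -, rfl⟩ | hq
      · obtain ⟨z, hz1, hz2⟩ := hmix y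
        exact ⟨z, hz2, hz1⟩
      · rcases Set.mem_singleton_iff.mp hq
        exact ⟨v, by simp [gBall, SimpleGraph.dist_self], by simp [gBall, SimpleGraph.dist_self]⟩
  obtain ⟨w, hw⟩ := hH F hFne hpair
  simp only [Set.mem_iInter] at hw
  have hwball : ∀ p ∈ F, G.dist p.1 w ≤ p.2 := fun p hp => hw p hp
  have hwx : ∀ x : V, G.dist x w ≤ r := fun x =>
    hwball (x, r) (Or.inl ⟨x, Set.mem_univ x, rfl⟩)
  have hwv : G.dist v w ≤ e - r := hwball (v, e - r) (Or.inr rfl)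
  have hwu : G.dist u w ≤ r := hwx u
  -- triangle inequality forces equalities
  have htri : G.dist u v ≤ G.dist u w + G.dist w v := hconn.dist_triangle
  have hwv' : G.dist w v ≤ e - r := by rwa [SimpleGraph.dist_comm]
  have huw : G.dist u w = r := by omega
  have hsum : G.dist u w + G.dist w v = G.dist u v := by omega
  -- w is a center vertex
  have heccw : ecc G w = r := by
    have h1 : ecc G w ≤ r := by
      apply Finset.sup_le
      intro y _
      have := hwx y
      rwa [SimpleGraph.dist_comm] at this
    have h2 : r ≤ ecc G w := hrad_le w
    omega
  exact ⟨w, ⟨huw, hsum⟩, heccw⟩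
end

section
/- If G is a finite connected Helly graph, then for every vertex v, e(v) = dist(v, C(G)) + rad(G), where dist(v, C(G)) = min_{c ∈ C(G)} dist(v,c). -/
open SimpleGraph

variable {V : Type*}

-- helper: split a walk
lemma walk_split (G : SimpleGraph V) (hconn : G.Connected) :
    ∀ {v u : V} (p : G.Walk v u) (k : ℕ), k ≤ p.length →
      ∃ w, G.dist v w ≤ k ∧ G.dist w u ≤ p.length - k := by
  intro v u p
  induction p with
  | nil =>
    rename_i a
    intro k hk
    exact ⟨a, by simp [SimpleGraph.dist_self], by simp [SimpleGraph.dist_self]⟩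
  | @cons a b c h p ih =>
    intro k hk
    cases k with
    | zero => exact ⟨a, by simp, by simpa using SimpleGraph.dist_le (Walk.cons h p)⟩
    | succ k' =>
      obtain ⟨w, hw1, hw2⟩ := ih k' (by simpa using hk)
      refine ⟨w, ?_, ?_⟩
      · calc G.dist a w ≤ G.dist a b + G.dist b w := hconn.dist_triangle
          _ ≤ 1 + k' := by
            have : G.dist a b ≤ 1 := SimpleGraph.dist_le (Walk.cons h Walk.nil)
            omega
          _ = k' + 1 := by omega
      · simpa using hw2

/-- In a finite connected Helly graph, for every vertex `v`,
`e(v) = dist(v, C(G)) + rad(G)`. -/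
theorem stmt2 (G : SimpleGraph V) [Fintype V] (hconn : G.Connected) (hH : IsHelly G)
    (v : V) :
    ecc G v = distS G v (gcenter G) + grad G := by
  have hne : Nonempty V := ⟨v⟩
  have hrad_le : ∀ u, grad G ≤ ecc G u := fun u => Nat.sInf_le ⟨u, rfl⟩
  have hrad_v : grad G ≤ ecc G v := hrad_le v
  have hecc_le : ∀ u w, G.dist u w ≤ ecc G u := fun u w =>
    Finset.le_sup (Finset.mem_univ w)
  -- center nonempty
  obtain ⟨c0, hc0⟩ : ∃ c, ecc G c = grad G := by
    have : grad G ∈ Set.range (ecc G) := Nat.sInf_mem (Set.range_nonempty _)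
    exact this
  -- ≤ direction
  have h1 : ∀ c ∈ gcenter G, ecc G v ≤ G.dist v c + grad G := by
    intro c hc
    have : ∀ u, G.dist v u ≤ G.dist v c + grad G := by
      intro u
      calc G.dist v u ≤ G.dist v c + G.dist c u := hconn.dist_triangle
        _ ≤ G.dist v c + ecc G c := by have := hecc_le c u; omega
        _ = G.dist v c + grad G := by rw [hc]
    exact Finset.sup_le fun u _ => this u
  -- ≥ direction via Helly
  set F : Set (V × ℕ) := insert (v, ecc G v - grad G) ((fun u => (u, grad G)) '' Set.univ) with hF
  have hpair : ∀ p ∈ F, ∀ q ∈ F, (gBall G p.1 p.2 ∩ gBall G q.1 q.2).Nonempty := by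
    have key : ∀ u : V, (gBall G v (ecc G v - grad G) ∩ gBall G u (grad G)).Nonempty := by
      intro u
      obtain ⟨p, hp⟩ := hconn.exists_walk_length_eq_dist v u
      obtain ⟨w, hw1, hw2⟩ := walk_split G hconn p (G.dist v u - grad G) (by omega)
      refine ⟨w, ?_, ?_⟩
      · show G.dist v w ≤ _
        have hvu : G.dist v u ≤ ecc G v := hecc_le v u
        omega
      · show G.dist u w ≤ grad G
        rw [SimpleGraph.dist_comm]
        omega
    intro p hp q hq
    rcases hp with hp | ⟨a, -, rfl⟩ <;> rcases hq with hq | ⟨b, -, rfl⟩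
    · subst hp; subst hq
      exact ⟨v, by simp [gBall, SimpleGraph.dist_self], by simp [gBall, SimpleGraph.dist_self]⟩
    · subst hp; exact key b
    · subst hq
      obtain ⟨w, h1', h2'⟩ := key a
      exact ⟨w, h2', h1'⟩
    · refine ⟨c0, ?_, ?_⟩ <;> simp only [gBall, Set.mem_setOf_eq]
      · rw [SimpleGraph.dist_comm]; exact hc0 ▸ hecc_le c0 a
      · rw [SimpleGraph.dist_comm]; exact hc0 ▸ hecc_le c0 b
  obtain ⟨x, hx⟩ := hH F ⟨_, Set.mem_insert _ _⟩ hpair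
  simp only [Set.mem_iInter] at hx
  have hxv : G.dist v x ≤ ecc G v - grad G := hx _ (Set.mem_insert _ _)
  have hxc : x ∈ gcenter G := by
    have hxe : ecc G x ≤ grad G := by
      apply Finset.sup_le
      intro u _
      have := hx (u, grad G) (Set.mem_insert_iff.mpr (Or.inr ⟨u, Set.mem_univ u, rfl⟩))
      simpa [gBall, SimpleGraph.dist_comm] using this
    exact le_antisymm hxe (hrad_le x)
  have h3 : G.dist v x ∈ G.dist v '' gcenter G := ⟨x, hxc, rfl⟩
  have h4 : distS G v (gcenter G) ≤ G.dist v x := Nat.sInf_le h3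
  have h2 : distS G v (gcenter G) ≤ ecc G v - grad G := h4.trans hxv
  -- also need ecc v ≤ distS + grad: use the minimizing center
  obtain ⟨c, hc, hcd⟩ : ∃ c ∈ gcenter G, G.dist v c = distS G v (gcenter G) := by
    have hne' : (G.dist v '' gcenter G).Nonempty := ⟨_, h3⟩
    have : sInf (G.dist v '' gcenter G) ∈ G.dist v '' gcenter G := Nat.sInf_mem hne'
    obtain ⟨c, hc1, hc2⟩ := this
    exact ⟨c, hc1, hc2⟩
  have := h1 c hc
  omega
end

section
/- Every ball of a finite connected C4-free Helly graph is convex: for every vertex v, every radius r ≥ 0, and every pair of vertices x, y in the ball N^r[v], every vertex w with dist(x,w) + dist(w,y) = dist(x,y) also lies in N^r[v]. -/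
open SimpleGraph

variable {V : Type*}

lemma exists_adj_of_dist (G : SimpleGraph V) (hconn : G.Connected) {x w : V} {a : ℕ}
    (h : G.dist x w = a + 1) : ∃ x', G.Adj x x' ∧ G.dist x' w = a := by
  obtain ⟨p, hp⟩ := (hconn x w).exists_walk_length_eq_dist
  cases p with
  | nil => simp at h
  | @cons _ x' _ hadj q =>
    refine ⟨x', hadj, le_antisymm ?_ ?_⟩
    · have := SimpleGraph.dist_le q
      simp [SimpleGraph.Walk.length_cons] at hp
      omega
    · have h1 : G.dist x x' = 1 := SimpleGraph.dist_eq_one_iff_adj.mpr hadj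
      have := hconn.dist_triangle (u := x) (v := x') (w := w)
      omega

lemma helly3 (G : SimpleGraph V) (hH : IsHelly G) (c1 c2 c3 : V) (r1 r2 r3 : ℕ)
    (h12 : (gBall G c1 r1 ∩ gBall G c2 r2).Nonempty)
    (h13 : (gBall G c1 r1 ∩ gBall G c3 r3).Nonempty)
    (h23 : (gBall G c2 r2 ∩ gBall G c3 r3).Nonempty) :
    ∃ z, G.dist c1 z ≤ r1 ∧ G.dist c2 z ≤ r2 ∧ G.dist c3 z ≤ r3 := by
  set F : Set (V × ℕ) := {(c1, r1), (c2, r2), (c3, r3)} with hF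
  have hself : ∀ c : V, ∀ ρ : ℕ, (gBall G c ρ ∩ gBall G c ρ).Nonempty := by
    intro c ρ
    exact ⟨c, by simp [gBall, SimpleGraph.dist_self], by simp [gBall, SimpleGraph.dist_self]⟩
  have h21 : (gBall G c2 r2 ∩ gBall G c1 r1).Nonempty := by rw [Set.inter_comm]; exact h12
  have h31 : (gBall G c3 r3 ∩ gBall G c1 r1).Nonempty := by rw [Set.inter_comm]; exact h13
  have h32 : (gBall G c3 r3 ∩ gBall G c2 r2).Nonempty := by rw [Set.inter_comm]; exact h23
  have hpair : ∀ p ∈ F, ∀ q ∈ F, (gBall G p.1 p.2 ∩ gBall G q.1 q.2).Nonempty := by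
    intro p hp q hq
    simp only [hF, Set.mem_insert_iff, Set.mem_singleton_iff] at hp hq
    rcases hp with rfl | rfl | rfl <;> rcases hq with rfl | rfl | rfl <;>
      first
        | exact hself _ _
        | exact h12 | exact h13 | exact h23
        | exact h21 | exact h31 | exact h32
  obtain ⟨z, hz⟩ := hH F ⟨(c1, r1), by simp [hF]⟩ hpair
  simp only [Set.mem_iInter] at hz
  exact ⟨z, hz (c1, r1) (by simp [hF]), hz (c2, r2) (by simp [hF]), hz (c3, r3) (by simp [hF])⟩

lemma ball_pt (G : SimpleGraph V) {c z : V} {ρ : ℕ} (h : G.dist c z ≤ ρ) : z ∈ gBall G c ρ := h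

lemma key_lemma (G : SimpleGraph V) (hconn : G.Connected) (hH : IsHelly G)
    (hC4 : C4Free G) (v : V) (r : ℕ) :
    ∀ k x y w, G.dist x y = k → G.dist v x ≤ r → G.dist v y ≤ r →
      G.dist x w + G.dist w y = k → G.dist v w ≤ r := by
  intro k
  induction k using Nat.strong_induction_on with
  | _ k ih =>
  intro x y w hxy hx hy hw
  rcases Nat.eq_zero_or_pos (G.dist x w) with h0 | hpa
  · have : x = w := hconn.dist_eq_zero_iff.mp h0
    subst this; exact hx
  rcases Nat.eq_zero_or_pos (G.dist w y) with h0 | hpb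
  · have : w = y := hconn.dist_eq_zero_iff.mp h0
    subst this; exact hy
  obtain ⟨a, ha⟩ : ∃ a, G.dist x w = a + 1 := ⟨G.dist x w - 1, by omega⟩
  obtain ⟨b, hb⟩ : ∃ b, G.dist w y = b + 1 := ⟨G.dist w y - 1, by omega⟩
  have hk : k = a + b + 2 := by omega
  rcases Nat.eq_zero_or_pos (a + b) with hab | hab
  · -- k = 2 : w is a common neighbor of x and y
    have ha0 : a = 0 := by omega
    have hb0 : b = 0 := by omega
    subst ha0; subst hb0
    have hxw : G.Adj x w := SimpleGraph.dist_eq_one_iff_adj.mp ha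
    have hwy : G.Adj w y := SimpleGraph.dist_eq_one_iff_adj.mp hb
    have hxy2 : G.dist x y = 2 := by omega
    rcases lt_or_eq_of_le hx with hxlt | hxeq
    · have := hconn.dist_triangle (u := v) (v := x) (w := w)
      omega
    rcases lt_or_eq_of_le hy with hylt | hyeq
    · have h1 : G.dist y w = 1 := by rw [SimpleGraph.dist_comm]; exact hb
      have := hconn.dist_triangle (u := v) (v := y) (w := w)
      omega
    -- dist v x = dist v y = r, and r ≥ 1
    have hr1 : 1 ≤ r := by
      by_contra h
      have hr0 : r = 0 := by omega
      have hx0 : G.dist v x = 0 := by omega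
      have hy0 : G.dist v y = 0 := by omega
      have hxv : v = x := hconn.dist_eq_zero_iff.mp hx0
      have hyv : v = y := hconn.dist_eq_zero_iff.mp hy0
      rw [← hxv, ← hyv] at hxy2
      simp [SimpleGraph.dist_self] at hxy2
    obtain ⟨p, hpadj, hpd⟩ := exists_adj_of_dist G hconn
      (show G.dist x v = (r - 1) + 1 by rw [SimpleGraph.dist_comm]; omega)
    obtain ⟨q, hqadj, hqd⟩ := exists_adj_of_dist G hconn
      (show G.dist y v = (r - 1) + 1 by rw [SimpleGraph.dist_comm]; omega)
    obtain ⟨z, hz1, hz2, hz3⟩ := helly3 G hH v x y (r - 1) 1 1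
      ⟨p, ball_pt G (by rw [SimpleGraph.dist_comm]; omega),
          ball_pt G (SimpleGraph.dist_eq_one_iff_adj.mpr hpadj).le⟩
      ⟨q, ball_pt G (by rw [SimpleGraph.dist_comm]; omega),
          ball_pt G (SimpleGraph.dist_eq_one_iff_adj.mpr hqadj).le⟩
      ⟨w, ball_pt G ha.le, ball_pt G (by rw [SimpleGraph.dist_comm]; exact hb.le)⟩
    have hzx : z ≠ x := by rintro rfl; omega
    have hzy : z ≠ y := by rintro rfl; omega
    have hxz : G.Adj x z := by
      refine SimpleGraph.dist_eq_one_iff_adj.mp (le_antisymm hz2 ?_)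
      have := hconn.pos_dist_of_ne (Ne.symm hzx)
      omega
    have hyz : G.Adj y z := by
      refine SimpleGraph.dist_eq_one_iff_adj.mp (le_antisymm hz3 ?_)
      have := hconn.pos_dist_of_ne (Ne.symm hzy)
      omega
    by_cases hzw : z = w
    · subst hzw; omega
    by_cases hwz : G.Adj w z
    · have h1 : G.dist z w = 1 := SimpleGraph.dist_eq_one_iff_adj.mpr hwz.symm
      have := hconn.dist_triangle (u := v) (v := z) (w := w)
      omega
    · exfalso
      apply hC4
      refine ⟨x, w, y, z, hxw.ne, ?_, hxz.ne, hwy.ne, ?_, hyz.ne, hxw, hwy, hyz, hxz.symm, ?_, hwz⟩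
      · rintro rfl; simp [SimpleGraph.dist_self] at hxy2
      · exact fun h => hzw h.symm
      · intro hadj
        have := SimpleGraph.dist_eq_one_iff_adj.mpr hadj
        omega
  · -- k ≥ 3
    obtain ⟨x', hx'adj, hx'w⟩ := exists_adj_of_dist G hconn ha
    have hxx'1 : G.dist x x' = 1 := SimpleGraph.dist_eq_one_iff_adj.mpr hx'adj
    have hx'y : G.dist x' y = a + b + 1 := by
      have hle : G.dist x' y ≤ a + (b + 1) := by
        have := hconn.dist_triangle (u := x') (v := w) (w := y)
        omega
      have hge := hconn.dist_triangle (u := x) (v := x') (w := y)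
      omega
    -- first Helly: find z in the ball, adjacent to x, with dist z y = k - 1
    obtain ⟨z, hz1, hz2, hz3⟩ := helly3 G hH v x y r 1 (a + b + 1)
      ⟨x, ball_pt G hx, ball_pt G (by simp [SimpleGraph.dist_self])⟩
      ⟨y, ball_pt G hy, ball_pt G (by simp [SimpleGraph.dist_self])⟩
      ⟨x', ball_pt G hxx'1.le, ball_pt G (by rw [SimpleGraph.dist_comm]; omega)⟩
    have hzy : G.dist z y = a + b + 1 := by
      have h1 := hconn.dist_triangle (u := x) (v := z) (w := y)
      have h2 : G.dist z y = G.dist y z := SimpleGraph.dist_comm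
      omega
    -- second Helly: common neighbor u of x' and z closer to y
    obtain ⟨p, hpadj, hpd⟩ := exists_adj_of_dist G hconn
      (show G.dist x' y = (a + b) + 1 from hx'y)
    obtain ⟨q, hqadj, hqd⟩ := exists_adj_of_dist G hconn
      (show G.dist z y = (a + b) + 1 from hzy)
    obtain ⟨u, hu1, hu2, hu3⟩ := helly3 G hH x' z y 1 1 (a + b)
      ⟨x, ball_pt G (by rw [SimpleGraph.dist_comm]; omega),
          ball_pt G (by rw [SimpleGraph.dist_comm]; omega)⟩
      ⟨p, ball_pt G (SimpleGraph.dist_eq_one_iff_adj.mpr hpadj).le,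
          ball_pt G (by rw [SimpleGraph.dist_comm]; omega)⟩
      ⟨q, ball_pt G (SimpleGraph.dist_eq_one_iff_adj.mpr hqadj).le,
          ball_pt G (by rw [SimpleGraph.dist_comm]; omega)⟩
    have huy : G.dist u y = a + b := by
      have h1 := hconn.dist_triangle (u := x') (v := u) (w := y)
      have h2 : G.dist u y = G.dist y u := SimpleGraph.dist_comm
      omega
    have huy' : G.dist y u = a + b := by rw [SimpleGraph.dist_comm]; exact huy
    have hzu : G.dist z u = 1 := by
      have : z ≠ u := by rintro rfl; omega
      have := hconn.pos_dist_of_ne this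
      omega
    have hx'u : G.dist x' u = 1 := by
      have : x' ≠ u := by rintro rfl; omega
      have := hconn.pos_dist_of_ne this
      omega
    -- u is in the ball, by IH applied to the pair (z, y) at distance k-1
    have hvu : G.dist v u ≤ r := by
      refine ih (a + b + 1) (by omega) z y u hzy hz1 hy ?_
      omega
    -- dist x u = 2
    have hxu : G.dist x u = 2 := by
      have hle : G.dist x u ≤ 2 := by
        have h1 := hconn.dist_triangle (u := x) (v := x') (w := u)
        omega
      have hge := hconn.dist_triangle (u := x) (v := u) (w := y)
      omega
    -- x' is in the ball, by IH applied to the pair (x, u) at distance 2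
    have hvx' : G.dist v x' ≤ r := by
      refine ih 2 (by omega) x u x' hxu hx hvu ?_
      omega
    -- conclude by IH applied to the pair (x', y) at distance k-1
    refine ih (a + b + 1) (by omega) x' y w hx'y hvx' hy ?_
    omega

/-- Every ball of a finite connected C4-free Helly graph is convex. -/
theorem stmt3 (G : SimpleGraph V) [Fintype V] (hconn : G.Connected) (hH : IsHelly G)
    (hC4 : C4Free G) (v : V) (r : ℕ) :
    ∀ x ∈ gBall G v r, ∀ y ∈ gBall G v r, ∀ w : V,
      G.dist x w + G.dist w y = G.dist x y → w ∈ gBall G v r := by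
  intro x hx y hy w hw
  exact key_lemma G hconn hH hC4 v r (G.dist x y) x y w rfl hx hy hw
end

section
/- For every pair of vertices v and u of a finite connected C4-free Helly graph G and every integer k with 0 ≤ k ≤ dist(u,v), the slice L(u,k,v) is a clique, i.e., any two distinct vertices of L(u,k,v) are adjacent. -/
open SimpleGraph

variable {V : Type*}

lemma myAdjDistLe {G : SimpleGraph V} (hconn : G.Connected) {a b c : V} (h : G.Adj b c) :
    G.dist a c ≤ G.dist a b + 1 := by
  have h1 := hconn.dist_triangle (u := a) (v := b) (w := c)
  have h2 : G.dist b c = 1 := dist_eq_one_iff_adj.2 h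
  omega

lemma myExistsPred {G : SimpleGraph V} (hconn : G.Connected) {u x : V} {n : ℕ}
    (h : G.dist u x = n + 1) :
    ∃ z, G.Adj x z ∧ G.dist x z = 1 ∧ G.dist u z = n := by
  obtain ⟨p, hp⟩ := hconn.exists_walk_length_eq_dist x u
  rw [dist_comm, h] at hp
  cases p with
  | nil => simp at hp
  | @cons _ b _ hadj q =>
    refine ⟨b, hadj, dist_eq_one_iff_adj.2 hadj, ?_⟩
    simp only [Walk.length_cons] at hp
    have h1 : G.dist u b ≤ n := by
      rw [dist_comm]; exact le_trans (dist_le q) (by omega)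
    have h2 : G.dist u x ≤ G.dist u b + 1 := myAdjDistLe hconn hadj.symm
    omega

lemma myHelly3 {G : SimpleGraph V} (hH : IsHelly G) (a b c : V) (ra rb rc : ℕ)
    (hab : ∃ p, G.dist a p ≤ ra ∧ G.dist b p ≤ rb)
    (hac : ∃ p, G.dist a p ≤ ra ∧ G.dist c p ≤ rc)
    (hbc : ∃ p, G.dist b p ≤ rb ∧ G.dist c p ≤ rc) :
    ∃ p, G.dist a p ≤ ra ∧ G.dist b p ≤ rb ∧ G.dist c p ≤ rc := by
  obtain ⟨pab, hab1, hab2⟩ := hab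
  obtain ⟨pac, hac1, hac2⟩ := hac
  obtain ⟨pbc, hbc1, hbc2⟩ := hbc
  have hne : ({(a, ra), (b, rb), (c, rc)} : Set (V × ℕ)).Nonempty := ⟨(a, ra), by simp⟩
  have hpair : ∀ p ∈ ({(a, ra), (b, rb), (c, rc)} : Set (V × ℕ)),
      ∀ q ∈ ({(a, ra), (b, rb), (c, rc)} : Set (V × ℕ)),
      (gBall G p.1 p.2 ∩ gBall G q.1 q.2).Nonempty := by
    intro p hp q hq
    simp only [Set.mem_insert_iff, Set.mem_singleton_iff] at hp hq
    rcases hp with rfl | rfl | rfl <;> rcases hq with rfl | rfl | rfl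
    · exact ⟨a, by simp [gBall, SimpleGraph.dist_self], by simp [gBall, SimpleGraph.dist_self]⟩
    · exact ⟨pab, hab1, hab2⟩
    · exact ⟨pac, hac1, hac2⟩
    · exact ⟨pab, hab2, hab1⟩
    · exact ⟨b, by simp [gBall, SimpleGraph.dist_self], by simp [gBall, SimpleGraph.dist_self]⟩
    · exact ⟨pbc, hbc1, hbc2⟩
    · exact ⟨pac, hac2, hac1⟩
    · exact ⟨pbc, hbc2, hbc1⟩
    · exact ⟨c, by simp [gBall, SimpleGraph.dist_self], by simp [gBall, SimpleGraph.dist_self]⟩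
  obtain ⟨w, hw⟩ := hH _ hne hpair
  simp only [Set.mem_iInter] at hw
  exact ⟨w, hw (a, ra) (by simp), hw (b, rb) (by simp), hw (c, rc) (by simp)⟩

lemma myKey {G : SimpleGraph V} (hconn : G.Connected) (hH : IsHelly G) (hC4 : C4Free G)
    (u v : V) (k j : ℕ) (hd : G.dist u v = (k + 1) + (j + 1)) :
    ∀ m : ℕ, ∀ x y : V, G.dist x y = m →
      G.dist u x = k + 1 → G.dist x v = j + 1 → G.dist u y = k + 1 → G.dist y v = j + 1 →
      x = y ∨ G.Adj x y := by
  intro m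
  induction m using Nat.strong_induction_on with
  | _ m IH =>
    intro x y hm hx1 hx2 hy1 hy2
    match m, hm with
    | 0, hm => exact Or.inl ((hconn x y).dist_eq_zero_iff.mp hm)
    | 1, hm => exact Or.inr (dist_eq_one_iff_adj.mp hm)
    | 2, hm =>
      by_contra hcon
      push_neg at hcon
      obtain ⟨hne, hnadj⟩ := hcon
      -- z : common neighbor of x, y closer to u
      obtain ⟨z, hz1, hz2, hz3⟩ := myHelly3 hH x y u 1 1 k
        (by obtain ⟨p, _, hp2, hp3⟩ := myExistsPred hconn hm
            exact ⟨p, le_of_eq hp3, le_of_eq hp2⟩)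
        (by obtain ⟨p, _, hp2, hp3⟩ := myExistsPred hconn hx1; exact ⟨p, le_of_eq hp2, le_of_eq hp3⟩)
        (by obtain ⟨p, _, hp2, hp3⟩ := myExistsPred hconn hy1; exact ⟨p, le_of_eq hp2, le_of_eq hp3⟩)
      -- w : common neighbor of x, y closer to v
      obtain ⟨w, hw1, hw2, hw3⟩ := myHelly3 hH x y v 1 1 j
        (by obtain ⟨p, _, hp2, hp3⟩ := myExistsPred hconn hm
            exact ⟨p, le_of_eq hp3, le_of_eq hp2⟩)
        (by obtain ⟨p, _, hp2, hp3⟩ := myExistsPred hconn (SimpleGraph.dist_comm ▸ hx2)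
            exact ⟨p, le_of_eq hp2, le_of_eq hp3⟩)
        (by obtain ⟨p, _, hp2, hp3⟩ := myExistsPred hconn (SimpleGraph.dist_comm ▸ hy2)
            exact ⟨p, le_of_eq hp2, le_of_eq hp3⟩)
      -- distances of z and w to u
      have huz : G.dist u z ≤ k := hz3
      have huw : k + 2 ≤ G.dist u w := by
        have ht := hconn.dist_triangle (u := u) (v := w) (w := v)
        have : G.dist w v ≤ j := SimpleGraph.dist_comm ▸ hw3
        omega
      have hxz : x ≠ z := by rintro rfl; omega
      have hyz : y ≠ z := by rintro rfl; omega
      have hxw : x ≠ w := by rintro rfl; omega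
      have hyw : y ≠ w := by rintro rfl; omega
      have hzw : z ≠ w := by rintro rfl; omega
      have hAxz : G.Adj x z := by
        refine dist_eq_one_iff_adj.mp ?_
        have := (hconn x z).dist_eq_zero_iff.not.mpr hxz
        omega
      have hAyz : G.Adj y z := by
        refine dist_eq_one_iff_adj.mp ?_
        have := (hconn y z).dist_eq_zero_iff.not.mpr hyz
        omega
      have hAxw : G.Adj x w := by
        refine dist_eq_one_iff_adj.mp ?_
        have := (hconn x w).dist_eq_zero_iff.not.mpr hxw
        omega
      have hAyw : G.Adj y w := by
        refine dist_eq_one_iff_adj.mp ?_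
        have := (hconn y w).dist_eq_zero_iff.not.mpr hyw
        omega
      have hnAzw : ¬ G.Adj z w := by
        intro hA
        have := myAdjDistLe hconn (a := u) hA
        omega
      exact hC4 ⟨x, z, y, w, hxz, hne, hxw, hyz.symm.imp id, hzw, hyw,
        hAxz, hAyz.symm, hAyw, hAxw.symm, hnadj, hnAzw⟩
    | (n + 3), hm =>
      exfalso
      -- z near x towards u
      obtain ⟨z, hz1, hz2, hz3⟩ := myHelly3 hH x y u 1 (n + 2) k
        (by obtain ⟨p, _, hp2, hp3⟩ := myExistsPred hconn (SimpleGraph.dist_comm ▸ hm : G.dist y x = n + 3)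
            exact ⟨p, le_of_eq hp2, le_of_eq hp3⟩)
        (by obtain ⟨p, _, hp2, hp3⟩ := myExistsPred hconn hx1; exact ⟨p, le_of_eq hp2, le_of_eq hp3⟩)
        (by obtain ⟨p, _, hp2, hp3⟩ := myExistsPred hconn hy1
            exact ⟨p, by omega, le_of_eq hp3⟩)
      -- w near x towards v
      obtain ⟨w, hw1, hw2, hw3⟩ := myHelly3 hH x y v 1 (n + 2) j
        (by obtain ⟨p, _, hp2, hp3⟩ := myExistsPred hconn (SimpleGraph.dist_comm ▸ hm : G.dist y x = n + 3)
            exact ⟨p, le_of_eq hp2, le_of_eq hp3⟩)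
        (by obtain ⟨p, _, hp2, hp3⟩ := myExistsPred hconn (SimpleGraph.dist_comm ▸ hx2)
            exact ⟨p, le_of_eq hp2, le_of_eq hp3⟩)
        (by obtain ⟨p, _, hp2, hp3⟩ := myExistsPred hconn (SimpleGraph.dist_comm ▸ hy2)
            exact ⟨p, by omega, le_of_eq hp3⟩)
      -- distance facts for z
      have huz : G.dist u z = k := by
        have ht := hconn.dist_triangle (u := u) (v := z) (w := x)
        have hzx : G.dist z x ≤ 1 := SimpleGraph.dist_comm ▸ hz1
        omega
      have hzv : G.dist z v = j + 2 := by
        have ht1 := hconn.dist_triangle (u := z) (v := x) (w := v)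
        have ht2 := hconn.dist_triangle (u := u) (v := z) (w := v)
        have hzx : G.dist z x ≤ 1 := SimpleGraph.dist_comm ▸ hz1
        omega
      -- distance facts for w
      have hwv : G.dist w v = j := by
        have ht := hconn.dist_triangle (u := x) (v := w) (w := v)
        have hwv' : G.dist w v ≤ j := SimpleGraph.dist_comm ▸ hw3
        omega
      have huw : G.dist u w = k + 2 := by
        have ht1 := hconn.dist_triangle (u := u) (v := x) (w := w)
        have ht2 := hconn.dist_triangle (u := u) (v := w) (w := v)
        omega
      -- t : common neighbor of z and w in the slice, closer to y
      have hyz : y ≠ z := by rintro rfl; omega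
      have hyw : y ≠ w := by rintro rfl; omega
      have hyzd : 1 ≤ G.dist y z := by
        have := (hconn y z).dist_eq_zero_iff.not.mpr hyz; omega
      have hywd : 1 ≤ G.dist y w := by
        have := (hconn y w).dist_eq_zero_iff.not.mpr hyw; omega
      obtain ⟨t, ht1, ht2, ht3⟩ := myHelly3 hH z w y 1 1 (n + 1)
        (⟨x, SimpleGraph.dist_comm ▸ hz1, SimpleGraph.dist_comm ▸ hw1⟩)
        (by obtain ⟨szn, hszn⟩ : ∃ s, G.dist y z = s + 1 := ⟨G.dist y z - 1, by omega⟩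
            obtain ⟨p, _, hp2, hp3⟩ := myExistsPred hconn hszn
            exact ⟨p, le_of_eq hp2, by omega⟩)
        (by obtain ⟨swn, hswn⟩ : ∃ s, G.dist y w = s + 1 := ⟨G.dist y w - 1, by omega⟩
            obtain ⟨p, _, hp2, hp3⟩ := myExistsPred hconn hswn
            exact ⟨p, le_of_eq hp2, by omega⟩)
      have hut : G.dist u t = k + 1 := by
        have ht4 := hconn.dist_triangle (u := u) (v := z) (w := t)
        have ht5 := hconn.dist_triangle (u := u) (v := t) (w := w)
        have htw : G.dist t w ≤ 1 := SimpleGraph.dist_comm ▸ ht2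
        omega
      have htv : G.dist t v = j + 1 := by
        have ht4 := hconn.dist_triangle (u := t) (v := w) (w := v)
        have ht5 := hconn.dist_triangle (u := z) (v := t) (w := v)
        have htw : G.dist t w ≤ 1 := SimpleGraph.dist_comm ▸ ht2
        omega
      have hxt : G.dist x t ≤ 2 := by
        have ht4 := hconn.dist_triangle (u := x) (v := z) (w := t)
        omega
      -- apply induction hypothesis twice
      have h1 : G.dist x t ≤ 1 := by
        rcases IH (G.dist x t) (by omega) x t rfl hx1 hx2 hut htv with rfl | hA
        · simp [SimpleGraph.dist_self]
        · exact le_of_eq (dist_eq_one_iff_adj.mpr hA)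
      have h2 : G.dist t y ≤ 1 := by
        rcases IH (G.dist t y) (by rw [SimpleGraph.dist_comm]; omega) t y rfl hut htv hy1 hy2 with rfl | hA
        · simp [SimpleGraph.dist_self]
        · exact le_of_eq (dist_eq_one_iff_adj.mpr hA)
      have := hconn.dist_triangle (u := x) (v := t) (w := y)
      omega

/-- In a finite connected C4-free Helly graph, every slice
`L(u,k,v)` with `0 ≤ k ≤ dist(u,v)` is a clique. -/
theorem stmt4 (G : SimpleGraph V) [Fintype V] (hconn : G.Connected) (hH : IsHelly G)
    (hC4 : C4Free G) (u v : V) (k : ℕ) (hk : k ≤ G.dist u v) :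
    G.IsClique (gslice G u k v) := by
  intro x hx y hy hxy
  obtain ⟨hx1, hx2⟩ := hx
  obtain ⟨hy1, hy2⟩ := hy
  rcases Nat.eq_zero_or_pos k with rfl | hk0
  · have hxu : u = x := (hconn u x).dist_eq_zero_iff.mp hx1
    have hyu : u = y := (hconn u y).dist_eq_zero_iff.mp hy1
    exact absurd (hxu ▸ hyu) hxy
  rcases Nat.eq_zero_or_pos (G.dist x v) with hxv | hxv0
  · have hyv : G.dist y v = 0 := by omega
    have hxv' : x = v := (hconn x v).dist_eq_zero_iff.mp hxv
    have hyv' : y = v := (hconn y v).dist_eq_zero_iff.mp hyv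
    exact absurd (hyv' ▸ hxv') hxy
  obtain ⟨k', rfl⟩ : ∃ k', k = k' + 1 := ⟨k - 1, by omega⟩
  obtain ⟨j, hj⟩ : ∃ j, G.dist x v = j + 1 := ⟨G.dist x v - 1, by omega⟩
  have hd : G.dist u v = (k' + 1) + (j + 1) := by omega
  have hy2' : G.dist y v = j + 1 := by omega
  rcases myKey hconn hH hC4 u v k' j hd (G.dist x y) x y rfl hx1 hj hy1 hy2' with rfl | h
  · exact absurd rfl hxy
  · exact h
end

section
/- Let G be a finite connected C4-free Helly graph with diameter d and radius r. Let s be an arbitrary vertex, let v ∈ F(s) be a vertex most distant from s, and let (x,y) be a diametral pair of G (i.e., dist(x,y) = d). Then e(v) ≥ d − 2. Furthermore, if e(v) = d − 2, then e(v) = 2r − 3 = dist(v,x) = dist(v,y) and d = 2r − 1. In particular, if e(v) is even, then e(v) ≥ d − 1. -/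
open SimpleGraph

variable {V : Type*}

namespace Stmt5

variable {G : SimpleGraph V}

lemma dist_getVert_le (hconn : G.Connected) {a b : V} (p : G.Walk a b) :
    ∀ i, G.dist a (p.getVert i) ≤ i ∧ G.dist (p.getVert i) b ≤ p.length - i := by
  induction p with
  | nil =>
    intro i
    simp [SimpleGraph.Walk.getVert, SimpleGraph.dist_self]
  | @cons u c b h q ih =>
    intro i
    cases i with
    | zero =>
      refine ⟨by simp [SimpleGraph.dist_self], ?_⟩
      simpa using SimpleGraph.dist_le (SimpleGraph.Walk.cons h q)
    | succ i =>
      obtain ⟨h1, h2⟩ := ih i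
      constructor
      · calc G.dist u ((SimpleGraph.Walk.cons h q).getVert (i+1))
            ≤ G.dist u c + G.dist c (q.getVert i) := by
              rw [show (SimpleGraph.Walk.cons h q).getVert (i+1) = q.getVert i from rfl]
              exact hconn.dist_triangle
          _ ≤ 1 + i := by
              have : G.dist u c = 1 := SimpleGraph.dist_eq_one_iff_adj.mpr h
              omega
          _ = i + 1 := by omega
      · rw [show (SimpleGraph.Walk.cons h q).getVert (i+1) = q.getVert i from rfl]
        have : (SimpleGraph.Walk.cons h q).length = q.length + 1 := by simp
        omega

lemma ballInter (hconn : G.Connected) {a b : V} {ra rb : ℕ} (h : G.dist a b ≤ ra + rb) :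
    (gBall G a ra ∩ gBall G b rb).Nonempty := by
  obtain ⟨p, hp⟩ := hconn.exists_walk_length_eq_dist a b
  set i := min ra p.length with hi
  obtain ⟨h1, h2⟩ := dist_getVert_le hconn p i
  refine ⟨p.getVert i, ?_, ?_⟩
  · exact le_trans h1 (by omega)
  · have : G.dist b (p.getVert i) = G.dist (p.getVert i) b := SimpleGraph.dist_comm ..
    simp only [gBall, Set.mem_setOf_eq]
    omega

lemma hellyPoint (hH : IsHelly G) (hconn : G.Connected) {F : Set (V × ℕ)} (hne : F.Nonempty)
    (hpair : ∀ p ∈ F, ∀ q ∈ F, G.dist p.1 q.1 ≤ p.2 + q.2) :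
    ∃ m : V, ∀ p ∈ F, G.dist p.1 m ≤ p.2 := by
  obtain ⟨m, hm⟩ := hH F hne (fun p hp q hq => ballInter hconn (hpair p hp q hq))
  exact ⟨m, fun p hp => Set.mem_iInter₂.mp hm p hp⟩


/-- Square-building contradiction lemma. -/
lemma square (hH : IsHelly G) (hconn : G.Connected) (hC4 : C4Free G)
    {a1 a2 u1 u2 : V} {α β : ℕ}
    (ha : G.dist a1 a2 = 2)
    (h11 : G.dist u1 a1 ≤ α) (h12 : G.dist u1 a2 ≤ α)
    (h21 : G.dist u2 a1 ≤ β) (h22 : G.dist u2 a2 ≤ β)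
    (hα : 1 ≤ α) (hβ : 1 ≤ β)
    (hfar : α + β ≤ G.dist u1 u2) : False := by
  have mkz : ∀ (u : V) (γ : ℕ), 1 ≤ γ → G.dist u a1 ≤ γ → G.dist u a2 ≤ γ →
      ∃ z : V, G.dist a1 z ≤ 1 ∧ G.dist a2 z ≤ 1 ∧ G.dist u z ≤ γ - 1 := by
    intro u γ hγ hua1 hua2
    obtain ⟨z, hz⟩ := hellyPoint hH hconn (F := {(a1, 1), (a2, 1), (u, γ - 1)})
      ⟨(a1, 1), Or.inl rfl⟩
      (by
        rintro p hp q hq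
        simp only [Set.mem_insert_iff, Set.mem_singleton_iff] at hp hq
        have hcomm1 : G.dist a1 u = G.dist u a1 := SimpleGraph.dist_comm
        have hcomm2 : G.dist a2 u = G.dist u a2 := SimpleGraph.dist_comm
        have hcomm3 : G.dist a2 a1 = G.dist a1 a2 := SimpleGraph.dist_comm
        have hs1 : G.dist a1 a1 = 0 := SimpleGraph.dist_self
        have hs2 : G.dist a2 a2 = 0 := SimpleGraph.dist_self
        have hs3 : G.dist u u = 0 := SimpleGraph.dist_self
        rcases hp with rfl | rfl | rfl <;> rcases hq with rfl | rfl | rfl <;>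
          simp only <;> omega)
    exact ⟨z, hz (a1,1) (Or.inl rfl), hz (a2,1) (Or.inr (Or.inl rfl)),
      hz (u, γ-1) (Or.inr (Or.inr rfl))⟩
  obtain ⟨z1, hz11, hz12, hz1u⟩ := mkz u1 α hα h11 h12
  obtain ⟨z2, hz21, hz22, hz2u⟩ := mkz u2 β hβ h21 h22
  -- z1 z2 are at distance ≥ 2
  have hzz : 2 ≤ G.dist z1 z2 := by
    have t1 : G.dist u1 u2 ≤ G.dist u1 z1 + G.dist z1 u2 := hconn.dist_triangle
    have t2 : G.dist z1 u2 ≤ G.dist z1 z2 + G.dist z2 u2 := hconn.dist_triangle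
    have c1 : G.dist z2 u2 = G.dist u2 z2 := SimpleGraph.dist_comm
    omega
  have hne12 : a1 ≠ a2 := by
    intro h; rw [h, SimpleGraph.dist_self] at ha; omega
  have hz1a1 : z1 ≠ a1 := by
    intro h
    rw [h] at hz12
    have hc : G.dist a2 a1 = G.dist a1 a2 := SimpleGraph.dist_comm
    omega
  have hz1a2 : z1 ≠ a2 := by
    intro h
    rw [h] at hz11
    omega
  have hz2a1 : z2 ≠ a1 := by
    intro h
    rw [h] at hz22
    have hc : G.dist a2 a1 = G.dist a1 a2 := SimpleGraph.dist_comm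
    omega
  have hz2a2 : z2 ≠ a2 := by
    intro h
    rw [h] at hz21
    omega
  have hz1z2 : z1 ≠ z2 := by
    rintro rfl; rw [SimpleGraph.dist_self] at hzz; omega
  have adj1 : G.Adj a1 z1 := by
    rw [← SimpleGraph.dist_eq_one_iff_adj]
    have h0 : G.dist a1 z1 ≠ 0 := fun h =>
      hz1a1 ((hconn.dist_eq_zero_iff.mp (by rw [SimpleGraph.dist_comm]; exact h)))
    omega
  have adj2 : G.Adj a2 z1 := by
    rw [← SimpleGraph.dist_eq_one_iff_adj]
    have h0 : G.dist a2 z1 ≠ 0 := fun h =>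
      hz1a2 ((hconn.dist_eq_zero_iff.mp (by rw [SimpleGraph.dist_comm]; exact h)))
    omega
  have adj3 : G.Adj a1 z2 := by
    rw [← SimpleGraph.dist_eq_one_iff_adj]
    have h0 : G.dist a1 z2 ≠ 0 := fun h =>
      hz2a1 ((hconn.dist_eq_zero_iff.mp (by rw [SimpleGraph.dist_comm]; exact h)))
    omega
  have adj4 : G.Adj a2 z2 := by
    rw [← SimpleGraph.dist_eq_one_iff_adj]
    have h0 : G.dist a2 z2 ≠ 0 := fun h =>
      hz2a2 ((hconn.dist_eq_zero_iff.mp (by rw [SimpleGraph.dist_comm]; exact h)))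
    omega
  have nadj_a : ¬ G.Adj a1 a2 := by
    intro h
    have := SimpleGraph.dist_eq_one_iff_adj.mpr h
    omega
  have nadj_z : ¬ G.Adj z1 z2 := by
    intro h
    have := SimpleGraph.dist_eq_one_iff_adj.mpr h
    omega
  exact hC4 ⟨a1, z1, a2, z2, hz1a1.symm, hne12, Ne.symm hz2a1, hz1a2, hz1z2,
    Ne.symm hz2a2, adj1, adj2.symm, adj4, adj3.symm, nadj_a, nadj_z⟩


section finite
variable [Fintype V]

lemma dist_le_ecc' (G : SimpleGraph V) (v u : V) : G.dist v u ≤ ecc G v :=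
  Finset.le_sup (Finset.mem_univ u)

lemma ecc_le_gdiam' (G : SimpleGraph V) (v : V) : ecc G v ≤ gdiam G :=
  Finset.le_sup (Finset.mem_univ v)

lemma dist_le_gdiam' (G : SimpleGraph V) (v u : V) : G.dist v u ≤ gdiam G :=
  le_trans (dist_le_ecc' G v u) (ecc_le_gdiam' G v)

lemma grad_le_ecc' (G : SimpleGraph V) (v : V) : grad G ≤ ecc G v :=
  Nat.sInf_le ⟨v, rfl⟩

lemma ecc_le_of' (G : SimpleGraph V) (v : V) {n : ℕ} (h : ∀ u, G.dist v u ≤ n) : ecc G v ≤ n :=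
  Finset.sup_le (fun u _ => h u)

lemma exists_center [Nonempty V] : ∃ c : V, ecc G c = grad G := by
  have hne : (Set.range (ecc G)).Nonempty := ⟨ecc G (Classical.arbitrary V), ⟨_, rfl⟩⟩
  exact Nat.sInf_mem hne

lemma dist_le_two_grad (hconn : G.Connected) (u w : V) :
    G.dist u w ≤ 2 * grad G := by
  have : Nonempty V := hconn.nonempty
  obtain ⟨c, hc⟩ := exists_center (G := G)
  calc G.dist u w ≤ G.dist u c + G.dist c w := hconn.dist_triangle
    _ ≤ ecc G c + ecc G c := by
        have h1 : G.dist u c = G.dist c u := SimpleGraph.dist_comm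
        have := dist_le_ecc' G c u
        have := dist_le_ecc' G c w
        omega
    _ = 2 * grad G := by omega

/-- Helly point constrained by a finite list `S` of balls, inside all balls
`B(u, grad G)`; output is a central vertex. -/
lemma hellyCenter (hH : IsHelly G) (hconn : G.Connected) (S : Set (V × ℕ))
    (hS : ∀ p ∈ S, ∀ q ∈ S, G.dist p.1 q.1 ≤ p.2 + q.2)
    (hSr : ∀ p ∈ S, ∀ u : V, G.dist p.1 u ≤ p.2 + grad G) :
    ∃ m : V, (∀ p ∈ S, G.dist p.1 m ≤ p.2) ∧ ecc G m = grad G := by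
  have : Nonempty V := hconn.nonempty
  set F : Set (V × ℕ) := S ∪ Set.range (fun u : V => (u, grad G)) with hF
  have hne : F.Nonempty := ⟨(Classical.arbitrary V, grad G), Or.inr ⟨_, rfl⟩⟩
  have hpair : ∀ p ∈ F, ∀ q ∈ F, G.dist p.1 q.1 ≤ p.2 + q.2 := by
    rintro p (hp | ⟨u, rfl⟩) q (hq | ⟨w, rfl⟩)
    · exact hS p hp q hq
    · exact hSr p hp w
    · have := hSr q hq u
      have hc : G.dist u q.1 = G.dist q.1 u := SimpleGraph.dist_comm ..
      simp only at *
      omega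
    · have := dist_le_two_grad hconn u w
      simp only
      omega
  obtain ⟨m, hm⟩ := hellyPoint hH hconn hne hpair
  refine ⟨m, fun p hp => hm p (Or.inl hp), ?_⟩
  refine le_antisymm (ecc_le_of' G m fun u => ?_) (grad_le_ecc' G m)
  have h1 := hm (u, grad G) (Or.inr ⟨u, rfl⟩)
  have hc : G.dist u m = G.dist m u := SimpleGraph.dist_comm
  simp only at h1
  omega

/-- Descent: every vertex has a central vertex within `ecc v - grad G`. -/
lemma descent (hH : IsHelly G) (hconn : G.Connected) (v : V) :
    ∃ c : V, ecc G c = grad G ∧ G.dist v c + grad G ≤ ecc G v := by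
  have : Nonempty V := hconn.nonempty
  generalize hEv : ecc G v = E
  induction E using Nat.strong_induction_on generalizing v with
  | _ E ih =>
  rcases Nat.lt_or_ge (grad G) E with hgt | hle
  · -- descend one step
    set F : Set (V × ℕ) := {(v, 1)} ∪ Set.range (fun u : V => (u, E - 1)) with hF
    have hne : F.Nonempty := ⟨(v, 1), Or.inl rfl⟩
    have hpair : ∀ p ∈ F, ∀ q ∈ F, G.dist p.1 q.1 ≤ p.2 + q.2 := by
      rintro p (hp | ⟨u, rfl⟩) q (hq | ⟨w, rfl⟩)
      · rw [Set.mem_singleton_iff] at hp hq; subst hp; subst hq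
        simp [SimpleGraph.dist_self]
      · rw [Set.mem_singleton_iff] at hp; subst hp
        have := dist_le_ecc' G v w
        simp only
        omega
      · rw [Set.mem_singleton_iff] at hq; subst hq
        have := dist_le_ecc' G v u
        have hc : G.dist u v = G.dist v u := SimpleGraph.dist_comm
        simp only
        omega
      · have h1 := dist_le_two_grad hconn u w
        simp only
        omega
    obtain ⟨m, hm⟩ := hellyPoint hH hconn hne hpair
    have hvm : G.dist v m ≤ 1 := hm (v, 1) (Or.inl rfl)
    have hEm : ecc G m ≤ E - 1 := by
      refine ecc_le_of' G m fun u => ?_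
      have h1 := hm (u, E - 1) (Or.inr ⟨u, rfl⟩)
      have hc : G.dist u m = G.dist m u := SimpleGraph.dist_comm
      simp only at h1
      omega
    have hmlt : ecc G m < E := by
      have := grad_le_ecc' G m
      omega
    obtain ⟨c, hc, hdc⟩ := ih (ecc G m) hmlt m rfl
    refine ⟨c, hc, ?_⟩
    have htr : G.dist v c ≤ G.dist v m + G.dist m c := hconn.dist_triangle
    omega
  · refine ⟨v, le_antisymm (hEv ▸ hle) (grad_le_ecc' G v), ?_⟩
    have h1 := grad_le_ecc' G v
    simp [SimpleGraph.dist_self]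
    omega

/-- From a pair of central vertices at distance `n`, get one at any distance `1 ≤ j ≤ n`. -/
lemma pair_reduce (hH : IsHelly G) (hconn : G.Connected) :
    ∀ n : ℕ, ∀ j : ℕ, 1 ≤ j → j ≤ n → ∀ a b : V, ecc G a = grad G → ecc G b = grad G →
      G.dist a b = n →
      ∃ A B : V, ecc G A = grad G ∧ ecc G B = grad G ∧ G.dist A B = j := by
  intro n
  induction n with
  | zero => intro j h1 h0; omega
  | succ n ih =>
    intro j hj1 hjn a b ha hb hab
    rcases Nat.eq_or_lt_of_le hjn with heq | hlt
    · exact ⟨a, b, ha, hb, heq ▸ hab⟩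
    · -- j ≤ n; produce pair at distance n
      have hn1 : 1 ≤ n := by omega
      obtain ⟨m, hmS, hmc⟩ := hellyCenter hH hconn {(a, 1), (b, n)}
        (by
          rintro p (rfl | hp) q (rfl | hq)
          · simp [SimpleGraph.dist_self]
          · rw [Set.mem_singleton_iff] at hq; subst hq
            simp only
            omega
          · rw [Set.mem_singleton_iff] at hp; subst hp
            simp only
            rw [SimpleGraph.dist_comm]
            omega
          · rw [Set.mem_singleton_iff] at hp hq; subst hp; subst hq
            simp [SimpleGraph.dist_self])
        (by
          rintro p (rfl | hp) u
          · simp only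
            have := dist_le_ecc' G a u
            omega
          · rw [Set.mem_singleton_iff] at hp; subst hp
            simp only
            have := dist_le_ecc' G b u
            omega)
      have hma : G.dist a m ≤ 1 := hmS (a, 1) (Or.inl rfl)
      have hmb : G.dist b m ≤ n := hmS (b, n) (Or.inr rfl)
      have hmb' : G.dist b m = n := by
        have htr : G.dist a b ≤ G.dist a m + G.dist m b := hconn.dist_triangle
        have hc : G.dist m b = G.dist b m := SimpleGraph.dist_comm
        omega
      exact ih j hj1 (by omega) b m hb hmc hmb'


/-- "DEAD" lemma: when `d = 2r-1`, no two central vertices at distance 3 can have one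
of them at distance `≤ r-1` from a pole of a diametral pair. -/
lemma dead (hH : IsHelly G) (hconn : G.Connected) (hC4 : C4Free G)
    {p q a b : V}
    (hpq : G.dist p q + 1 = 2 * grad G)
    (hdle : ∀ u w : V, G.dist u w + 1 ≤ 2 * grad G)
    (ha : ecc G a = grad G) (hb : ecc G b = grad G)
    (hab : G.dist a b = 3) (hpa : G.dist p a + 1 ≤ grad G) : False := by
  set r := grad G with hrdef
  have hr3 : 3 ≤ r := by have := dist_le_ecc' G a b; omega
  have hpb : G.dist p b ≤ r := by
    have h1 : G.dist b p ≤ ecc G b := dist_le_ecc' G b p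
    have h2 : G.dist p b = G.dist b p := SimpleGraph.dist_comm
    omega
  -- p1
  obtain ⟨p1, hp1S, hp1c⟩ := hellyCenter hH hconn {(p, r-1), (a,1), (b,2)}
    (by
      rintro P hP Q hQ
      simp only [Set.mem_insert_iff, Set.mem_singleton_iff] at hP hQ
      have c1 : G.dist a p = G.dist p a := SimpleGraph.dist_comm
      have c2 : G.dist b p = G.dist p b := SimpleGraph.dist_comm
      have c3 : G.dist b a = G.dist a b := SimpleGraph.dist_comm
      have s1 : G.dist p p = 0 := SimpleGraph.dist_self
      have s2 : G.dist a a = 0 := SimpleGraph.dist_self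
      have s3 : G.dist b b = 0 := SimpleGraph.dist_self
      rcases hP with rfl | rfl | rfl <;> rcases hQ with rfl | rfl | rfl <;>
        simp only <;> omega)
    (by
      rintro P hP u
      simp only [Set.mem_insert_iff, Set.mem_singleton_iff] at hP
      have d1 := hdle p u
      have d2 := dist_le_ecc' G a u
      have d3 := dist_le_ecc' G b u
      rcases hP with rfl | rfl | rfl <;> simp only <;> omega)
  have hpp1 : G.dist p p1 ≤ r - 1 := hp1S (p, r-1) (Or.inl rfl)
  have hap1 : G.dist a p1 ≤ 1 := hp1S (a, 1) (Or.inr (Or.inl rfl))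
  have hbp1 : G.dist b p1 ≤ 2 := hp1S (b, 2) (Or.inr (Or.inr rfl))
  have hbp1' : G.dist p1 b = 2 := by
    have t : G.dist a b ≤ G.dist a p1 + G.dist p1 b := hconn.dist_triangle
    have c : G.dist p1 b = G.dist b p1 := SimpleGraph.dist_comm
    omega
  -- p2
  obtain ⟨p2, hp2S, hp2c⟩ := hellyCenter hH hconn {(p, r-1), (p1,1), (b,1)}
    (by
      rintro P hP Q hQ
      simp only [Set.mem_insert_iff, Set.mem_singleton_iff] at hP hQ
      have c1 : G.dist p1 p = G.dist p p1 := SimpleGraph.dist_comm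
      have c2 : G.dist b p = G.dist p b := SimpleGraph.dist_comm
      have c3 : G.dist b p1 = G.dist p1 b := SimpleGraph.dist_comm
      have s1 : G.dist p p = 0 := SimpleGraph.dist_self
      have s2 : G.dist p1 p1 = 0 := SimpleGraph.dist_self
      have s3 : G.dist b b = 0 := SimpleGraph.dist_self
      rcases hP with rfl | rfl | rfl <;> rcases hQ with rfl | rfl | rfl <;>
        simp only <;> omega)
    (by
      rintro P hP u
      simp only [Set.mem_insert_iff, Set.mem_singleton_iff] at hP
      have d1 := hdle p u
      have d2 := dist_le_ecc' G p1 u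
      have d3 := dist_le_ecc' G b u
      rcases hP with rfl | rfl | rfl <;> simp only <;> omega)
  have hpp2 : G.dist p p2 ≤ r - 1 := hp2S (p, r-1) (Or.inl rfl)
  have hp1p2 : G.dist p1 p2 ≤ 1 := hp2S (p1, 1) (Or.inr (Or.inl rfl))
  have hbp2 : G.dist b p2 ≤ 1 := hp2S (b, 1) (Or.inr (Or.inr rfl))
  have hap2 : G.dist a p2 = 2 := by
    have t1 : G.dist a p2 ≤ G.dist a p1 + G.dist p1 p2 := hconn.dist_triangle
    have t2 : G.dist a b ≤ G.dist a p2 + G.dist p2 b := hconn.dist_triangle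
    have c : G.dist p2 b = G.dist b p2 := SimpleGraph.dist_comm
    omega
  -- the square
  have hqa : G.dist q a ≤ r := by
    have h1 := dist_le_ecc' G a q
    have c : G.dist q a = G.dist a q := SimpleGraph.dist_comm
    omega
  have hqp2 : G.dist q p2 ≤ r := by
    have h1 := dist_le_ecc' G p2 q
    have c : G.dist q p2 = G.dist p2 q := SimpleGraph.dist_comm
    omega
  exact square hH hconn hC4 hap2 (α := r - 1) (β := r)
    (by omega) hpp2 hqa hqp2 (by omega) (by omega) (by omega)

/-- If `d = 2r` then the center is a clique. -/
lemma center_diam_one (hH : IsHelly G) (hconn : G.Connected) (hC4 : C4Free G)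
    {x y : V} (hxy : G.dist x y = gdiam G) (hd : gdiam G = 2 * grad G)
    {a b : V} (ha : ecc G a = grad G) (hb : ecc G b = grad G) :
    G.dist a b ≤ 1 := by
  by_contra hcon
  obtain ⟨A, B, hA, hB, hAB⟩ := pair_reduce hH hconn (G.dist a b) 2 (by omega) (by omega)
    a b ha hb rfl
  have hr2 : 2 ≤ grad G := by have := dist_le_ecc' G A B; omega
  have hxA : G.dist x A ≤ grad G := by
    have h1 := dist_le_ecc' G A x
    have c : G.dist x A = G.dist A x := SimpleGraph.dist_comm
    omega
  have hxB : G.dist x B ≤ grad G := by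
    have h1 := dist_le_ecc' G B x
    have c : G.dist x B = G.dist B x := SimpleGraph.dist_comm
    omega
  have hyA : G.dist y A ≤ grad G := by
    have h1 := dist_le_ecc' G A y
    have c : G.dist y A = G.dist A y := SimpleGraph.dist_comm
    omega
  have hyB : G.dist y B ≤ grad G := by
    have h1 := dist_le_ecc' G B y
    have c : G.dist y B = G.dist B y := SimpleGraph.dist_comm
    omega
  exact square hH hconn hC4 hAB hxA hxB hyA hyB (by omega) (by omega) (by omega)

/-- If `d ≤ 2r - 2` then the center is a clique. -/
lemma center_diam_one' (hH : IsHelly G) (hconn : G.Connected)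
    (hd : gdiam G + 2 ≤ 2 * grad G)
    {a b : V} (ha : ecc G a = grad G) (hb : ecc G b = grad G) :
    G.dist a b ≤ 1 := by
  by_contra hcon
  obtain ⟨A, B, hA, hB, hAB⟩ := pair_reduce hH hconn (G.dist a b) 2 (by omega) (by omega)
    a b ha hb rfl
  have hr2 : 2 ≤ grad G := by have := dist_le_ecc' G A B; omega
  obtain ⟨m, hm⟩ := hellyPoint hH hconn
    (F := ({(A,1), (B,1)} : Set (V × ℕ)) ∪ Set.range (fun u : V => (u, grad G - 1)))
    ⟨(A,1), Or.inl (Or.inl rfl)⟩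
    (by
      rintro P hP Q hQ
      rcases hP with hP | ⟨u, rfl⟩ <;> rcases hQ with hQ | ⟨w, rfl⟩
      · simp only [Set.mem_insert_iff, Set.mem_singleton_iff] at hP hQ
        have c3 : G.dist B A = G.dist A B := SimpleGraph.dist_comm
        have s1 : G.dist A A = 0 := SimpleGraph.dist_self
        have s2 : G.dist B B = 0 := SimpleGraph.dist_self
        rcases hP with rfl | rfl <;> rcases hQ with rfl | rfl <;> simp only <;> omega
      · simp only [Set.mem_insert_iff, Set.mem_singleton_iff] at hP
        have d1 := dist_le_ecc' G A w
        have d2 := dist_le_ecc' G B w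
        rcases hP with rfl | rfl <;> simp only <;> omega
      · simp only [Set.mem_insert_iff, Set.mem_singleton_iff] at hQ
        have d1 := dist_le_ecc' G A u
        have d2 := dist_le_ecc' G B u
        have c1 : G.dist u A = G.dist A u := SimpleGraph.dist_comm
        have c2 : G.dist u B = G.dist B u := SimpleGraph.dist_comm
        rcases hQ with rfl | rfl <;> simp only <;> omega
      · have d1 := dist_le_gdiam' G u w
        simp only
        omega)
  have hlt : ecc G m ≤ grad G - 1 := by
    refine ecc_le_of' G m fun u => ?_
    have h1 := hm (u, grad G - 1) (Or.inr ⟨u, rfl⟩)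
    have c : G.dist u m = G.dist m u := SimpleGraph.dist_comm
    simp only at h1
    omega
  have := grad_le_ecc' G m
  omega

/-- If `d = 2r - 1` then the center has diameter at most 3. -/
lemma center_diam_three (hH : IsHelly G) (hconn : G.Connected) (hC4 : C4Free G)
    {x y : V} (hxy : G.dist x y = gdiam G) (hd : gdiam G + 1 = 2 * grad G)
    {a b : V} (ha : ecc G a = grad G) (hb : ecc G b = grad G) :
    G.dist a b ≤ 3 := by
  by_contra hcon
  obtain ⟨A, B, hA, hB, hAB⟩ := pair_reduce hH hconn (G.dist a b) 4 (by omega) (by omega)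
    a b ha hb rfl
  have hr4 : 4 ≤ grad G := by have := dist_le_ecc' G A B; omega
  set r := grad G with hrdef
  have hdle : ∀ u w : V, G.dist u w + 1 ≤ 2 * r := by
    intro u w; have := dist_le_gdiam' G u w; omega
  obtain ⟨p1, hp1S, hp1c⟩ := hellyCenter hH hconn {(x, r-1), (A,1), (B,3)}
    (by
      rintro P hP Q hQ
      simp only [Set.mem_insert_iff, Set.mem_singleton_iff] at hP hQ
      have c1 : G.dist A x = G.dist x A := SimpleGraph.dist_comm
      have c2 : G.dist B x = G.dist x B := SimpleGraph.dist_comm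
      have c3 : G.dist B A = G.dist A B := SimpleGraph.dist_comm
      have d1 : G.dist x A ≤ r := by
        have h1 := dist_le_ecc' G A x
        have c : G.dist x A = G.dist A x := SimpleGraph.dist_comm
        omega
      have d2 : G.dist x B ≤ r := by
        have h1 := dist_le_ecc' G B x
        have c : G.dist x B = G.dist B x := SimpleGraph.dist_comm
        omega
      have s1 : G.dist x x = 0 := SimpleGraph.dist_self
      have s2 : G.dist A A = 0 := SimpleGraph.dist_self
      have s3 : G.dist B B = 0 := SimpleGraph.dist_self
      rcases hP with rfl | rfl | rfl <;> rcases hQ with rfl | rfl | rfl <;>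
        simp only <;> omega)
    (by
      rintro P hP u
      simp only [Set.mem_insert_iff, Set.mem_singleton_iff] at hP
      have d1 := hdle x u
      have d2 := dist_le_ecc' G A u
      have d3 := dist_le_ecc' G B u
      rcases hP with rfl | rfl | rfl <;> simp only <;> omega)
  have hxp1 : G.dist x p1 ≤ r - 1 := hp1S (x, r-1) (Or.inl rfl)
  have hAp1 : G.dist A p1 ≤ 1 := hp1S (A, 1) (Or.inr (Or.inl rfl))
  have hBp1 : G.dist B p1 ≤ 3 := hp1S (B, 3) (Or.inr (Or.inr rfl))
  have hp1B : G.dist p1 B = 3 := by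
    have t : G.dist A B ≤ G.dist A p1 + G.dist p1 B := hconn.dist_triangle
    have c : G.dist p1 B = G.dist B p1 := SimpleGraph.dist_comm
    omega
  exact dead hH hconn hC4 (p := x) (q := y) (a := p1) (b := B)
    (by omega) hdle hp1c hB hp1B (by omega)


end finite
end Stmt5

open Stmt5 in
/-- In a finite connected C4-free Helly graph with diameter `d` and
radius `r`, if `v` is a vertex most distant from an arbitrary vertex `s` and
`(x,y)` is a diametral pair, then `e(v) ≥ d − 2`; if `e(v) = d − 2` then
`e(v) = 2r − 3 = dist(v,x) = dist(v,y)` and `d = 2r − 1`; in particular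
if `e(v)` is even then `e(v) ≥ d − 1`. -/
theorem stmt5 (G : SimpleGraph V) [Fintype V] (hconn : G.Connected) (hH : IsHelly G)
    (hC4 : C4Free G) (s v x y : V)
    (hv : G.dist s v = ecc G s) (hxy : G.dist x y = gdiam G) :
    gdiam G - 2 ≤ ecc G v ∧
    (ecc G v = gdiam G - 2 →
      ecc G v = 2 * grad G - 3 ∧ ecc G v = G.dist v x ∧ ecc G v = G.dist v y ∧
        gdiam G = 2 * grad G - 1) ∧
    (Even (ecc G v) → gdiam G - 1 ≤ ecc G v) := by
  classical
  have hne : Nonempty V := hconn.nonempty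
  have h2r : gdiam G ≤ 2 * grad G :=
    Finset.sup_le (fun u _ => ecc_le_of' G u (fun w => dist_le_two_grad hconn u w))
  obtain ⟨cs, hcsc, hcs⟩ := descent hH hconn s
  obtain ⟨cv, hcvc, hcv⟩ := descent hH hconn v
  have hvcs : grad G ≤ G.dist v cs := by
    have t : G.dist s v ≤ G.dist s cs + G.dist cs v := hconn.dist_triangle
    have c : G.dist cs v = G.dist v cs := SimpleGraph.dist_comm
    omega
  have htri : G.dist v cs ≤ G.dist v cv + G.dist cv cs := hconn.dist_triangle
  -- key eccentricity lower bounds by case on d vs 2r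
  have hEcc1 : gdiam G = 2 * grad G → 2 * grad G ≤ ecc G v + 1 := by
    intro hd
    have hD := center_diam_one hH hconn hC4 hxy hd hcvc hcsc
    omega
  have hEcc2 : gdiam G + 1 = 2 * grad G → 2 * grad G ≤ ecc G v + 3 := by
    intro hd
    have hD := center_diam_three hH hconn hC4 hxy hd hcvc hcsc
    omega
  have hEcc3 : gdiam G + 2 ≤ 2 * grad G → 2 * grad G ≤ ecc G v + 1 := by
    intro hd
    have hD := center_diam_one' hH hconn hd hcvc hcsc
    omega
  have conj1 : gdiam G - 2 ≤ ecc G v := by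
    rcases (by omega : gdiam G = 2 * grad G ∨ gdiam G + 1 = 2 * grad G ∨
        gdiam G + 2 ≤ 2 * grad G) with hd | hd | hd
    · have := hEcc1 hd; omega
    · have := hEcc2 hd; omega
    · have := hEcc3 hd; omega
  have conj2 : ecc G v = gdiam G - 2 →
      ecc G v = 2 * grad G - 3 ∧ ecc G v = G.dist v x ∧ ecc G v = G.dist v y ∧
        gdiam G = 2 * grad G - 1 := by
    intro hE
    have hgrv := grad_le_ecc' G v
    have heccd : ecc G v ≤ gdiam G := Finset.le_sup (Finset.mem_univ v)
    by_cases hd0 : gdiam G = 0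
    · have hvx := dist_le_gdiam' G v x
      have hvy := dist_le_gdiam' G v y
      have hr0 : grad G = 0 := by omega
      refine ⟨by omega, by omega, by omega, by omega⟩
    · by_cases hd1 : gdiam G = 1
      · exfalso
        have hvx := dist_le_ecc' G v x
        have hvy := dist_le_ecc' G v y
        have hvx0 : G.dist v x = 0 := by omega
        have hvy0 : G.dist v y = 0 := by omega
        have hx : v = x := hconn.dist_eq_zero_iff.mp hvx0
        have hy : v = y := hconn.dist_eq_zero_iff.mp hvy0
        rw [← hx, ← hy] at hxy
        rw [SimpleGraph.dist_self] at hxy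
        omega
      · -- gdiam ≥ 2
        rcases (by omega : gdiam G = 2 * grad G ∨ gdiam G + 1 = 2 * grad G ∨
            gdiam G + 2 ≤ 2 * grad G) with hd | hd | hd
        · exfalso; have := hEcc1 hd; omega
        · -- the genuine case
          have hr3 : 3 ≤ grad G := by omega
          have hdle : ∀ u w : V, G.dist u w + 1 ≤ 2 * grad G := by
            intro u w; have := dist_le_gdiam' G u w; omega
          have claim : ∀ p q : V, G.dist p q + 1 = 2 * grad G → G.dist v p = ecc G v := by
            intro p q hpq
            have hub : G.dist v p ≤ ecc G v := dist_le_ecc' G v p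
            by_contra hlt
            obtain ⟨m, hmS, hmc⟩ := hellyCenter hH hconn {(v, grad G - 3), (p, grad G - 1)}
              (by
                rintro P hP Q hQ
                simp only [Set.mem_insert_iff, Set.mem_singleton_iff] at hP hQ
                have c1 : G.dist p v = G.dist v p := SimpleGraph.dist_comm
                have s1 : G.dist v v = 0 := SimpleGraph.dist_self
                have s2 : G.dist p p = 0 := SimpleGraph.dist_self
                rcases hP with rfl | rfl <;> rcases hQ with rfl | rfl <;>
                  simp only <;> omega)
              (by
                rintro P hP u
                simp only [Set.mem_insert_iff, Set.mem_singleton_iff] at hP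
                have d1 := dist_le_ecc' G v u
                have d2 := hdle p u
                rcases hP with rfl | rfl <;> simp only <;> omega)
            have hvm : G.dist v m ≤ grad G - 3 := hmS (v, grad G - 3) (Or.inl rfl)
            have hpm : G.dist p m ≤ grad G - 1 := hmS (p, grad G - 1) (Or.inr rfl)
            have hmcs : G.dist m cs = 3 := by
              have t : G.dist v cs ≤ G.dist v m + G.dist m cs := hconn.dist_triangle
              have hDr := center_diam_three hH hconn hC4 hxy hd hmc hcsc
              omega
            exact dead hH hconn hC4 (p := p) (q := q) (a := m) (b := cs)
              hpq hdle hmc hcsc hmcs (by omega)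
          have hx' : G.dist v x = ecc G v := claim x y (by omega)
          have hy' : G.dist v y = ecc G v := by
            refine claim y x ?_
            have c : G.dist y x = G.dist x y := SimpleGraph.dist_comm
            omega
          exact ⟨by omega, hx'.symm, hy'.symm, by omega⟩
        · exfalso; have := hEcc3 hd; omega
  refine ⟨conj1, conj2, ?_⟩
  intro hEven
  by_cases hE : ecc G v = gdiam G - 2
  · obtain ⟨h1, _, _, h4⟩ := conj2 hE
    rw [Nat.even_iff] at hEven
    omega
  · omega
end

section
/- Let G be a finite connected C4-free Helly graph, let s be an arbitrary vertex, let v ∈ F(s) be a vertex most distant from s, and let (x,y) be a diametral pair of G. If max{dist(v,x), dist(v,y)} ≤ 2k for some nonnegative integer k, then diam(G) ≤ 2k + 1. -/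
open SimpleGraph

variable {V : Type*}

lemma exists_adj_near {G : SimpleGraph V} (hconn : G.Connected) {u v : V}
    (h : G.dist u v ≠ 0) : ∃ w, G.Adj u w ∧ G.dist w v + 1 = G.dist u v := by
  obtain ⟨p, hp⟩ := exists_walk_of_dist_ne_zero h
  cases p with
  | nil => rw [← hp] at h; simp at h
  | @cons _ w _ hadj q =>
      refine ⟨w, hadj, ?_⟩
      have h1 : G.dist w v ≤ q.length := dist_le q
      have h2 : G.dist u v ≤ G.dist u w + G.dist w v := hconn.dist_triangle
      have h3 : G.dist u w = 1 := dist_eq_one_iff_adj.mpr hadj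
      have h4 : q.length + 1 = G.dist u v := by
        simpa [SimpleGraph.Walk.length_cons] using hp
      omega

lemma gexists_between {G : SimpleGraph V} (hconn : G.Connected) (u v : V) :
    ∀ r, r ≤ G.dist u v → ∃ w, G.dist u w ≤ r ∧ G.dist w v + r = G.dist u v
  | 0, _ => ⟨u, by simp [SimpleGraph.dist_self]⟩
  | (r+1), hr => by
      obtain ⟨w, hw1, hw2⟩ := gexists_between hconn u v r (by omega)
      obtain ⟨w', hadj, hw'⟩ := exists_adj_near hconn (show G.dist w v ≠ 0 by omega)
      have h2 : G.dist u w' ≤ G.dist u w + G.dist w w' := hconn.dist_triangle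
      have h3 : G.dist w w' = 1 := dist_eq_one_iff_adj.mpr hadj
      exact ⟨w', by omega, by omega⟩

lemma ball_inter {G : SimpleGraph V} (hconn : G.Connected) {u v : V} {r1 r2 : ℕ}
    (h : G.dist u v ≤ r1 + r2) : ∃ z, G.dist u z ≤ r1 ∧ G.dist v z ≤ r2 := by
  by_cases hc : G.dist u v ≤ r1
  · exact ⟨v, hc, by simp [SimpleGraph.dist_self]⟩
  · obtain ⟨w, h1, h2⟩ := gexists_between hconn u v r1 (by omega)
    refine ⟨w, h1, ?_⟩
    rw [dist_comm]
    omega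

lemma helly_of_dist {G : SimpleGraph V} (hH : IsHelly G) (hconn : G.Connected)
    (F : Set (V × ℕ)) (hne : F.Nonempty)
    (hd : ∀ p ∈ F, ∀ q ∈ F, G.dist p.1 q.1 ≤ p.2 + q.2) :
    ∃ w, ∀ p ∈ F, G.dist p.1 w ≤ p.2 := by
  obtain ⟨w, hw⟩ := hH F hne (fun p hp q hq => by
    obtain ⟨z, hz1, hz2⟩ := ball_inter hconn (hd p hp q hq)
    exact ⟨z, hz1, hz2⟩)
  exact ⟨w, fun p hp => Set.mem_iInter₂.mp hw p hp⟩

/-- In a finite connected C4-free Helly graph, if `v` is most distant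
from an arbitrary vertex `s`, `(x,y)` is a diametral pair and
`max{dist(v,x), dist(v,y)} ≤ 2k`, then `diam(G) ≤ 2k + 1`. -/
theorem stmt6 (G : SimpleGraph V) [Fintype V] (hconn : G.Connected) (hH : IsHelly G)
    (hC4 : C4Free G) (s v x y : V)
    (hv : G.dist s v = ecc G s) (hxy : G.dist x y = gdiam G)
    (k : ℕ) (hk : max (G.dist v x) (G.dist v y) ≤ 2 * k) :
    gdiam G ≤ 2 * k + 1 := by
  rw [← hxy]
  by_contra hcon
  push_neg at hcon
  have hsle : ∀ u : V, G.dist s u ≤ G.dist s v := by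
    intro u
    rw [hv]
    exact Finset.le_sup (Finset.mem_univ u)
  have hvx : G.dist v x ≤ 2 * k := le_trans (le_max_left _ _) hk
  have hvy : G.dist v y ≤ 2 * k := le_trans (le_max_right _ _) hk
  have tri : ∀ a b c : V, G.dist a c ≤ G.dist a b + G.dist b c := fun _ _ _ => hconn.dist_triangle
  have dzero : ∀ a b : V, G.dist a b = 0 → a = b := fun a b h => (hconn.dist_eq_zero_iff).mp h
  -- commutations and self-distances
  have c_yx : G.dist y x = G.dist x y := dist_comm
  have c_xv : G.dist x v = G.dist v x := dist_comm
  have c_yv : G.dist y v = G.dist v y := dist_comm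
  have c_xs : G.dist x s = G.dist s x := dist_comm
  have c_ys : G.dist y s = G.dist s y := dist_comm
  have c_vs : G.dist v s = G.dist s v := dist_comm
  have s_x : G.dist x x = 0 := dist_self
  have s_y : G.dist y y = 0 := dist_self
  have s_v : G.dist v v = 0 := dist_self
  have s_s : G.dist s s = 0 := dist_self
  have hsx : G.dist s x ≤ G.dist s v := hsle x
  have hsy : G.dist s y ≤ G.dist s v := hsle y
  have hXY : G.dist x y ≤ G.dist x v + G.dist v y := tri x v y
  have hXSY : G.dist x y ≤ G.dist x s + G.dist s y := tri x s y
  have hk1 : 1 ≤ k := by omega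
  have hek : k + 1 ≤ G.dist s v := by omega
  -- near-halves of D
  obtain ⟨h', hh, hsum, hh1, hh2⟩ :
      ∃ p q : ℕ, p + q = G.dist x y ∧ k + 1 ≤ p ∧ p ≤ q :=
    ⟨G.dist x y / 2, G.dist x y - G.dist x y / 2, by omega, by omega, by omega⟩
  -- ===== Helly application 1 : midpoint w =====
  obtain ⟨w, hw⟩ := helly_of_dist hH hconn
    ({(x, hh), (y, h'), (v, k - 1), (s, G.dist s v - (k - 1))} : Set (V × ℕ))
    ⟨_, Set.mem_insert _ _⟩
    (by
      intro p hp q hq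
      simp only [Set.mem_insert_iff, Set.mem_singleton_iff] at hp hq
      rcases hp with rfl | rfl | rfl | rfl <;> rcases hq with rfl | rfl | rfl | rfl <;>
        dsimp only <;> omega)
  have hw_x : G.dist x w ≤ hh := hw (x, hh) (by simp)
  have hw_y : G.dist y w ≤ h' := hw (y, h') (by simp)
  have hw_v : G.dist v w ≤ k - 1 := hw (v, k - 1) (by simp)
  have hw_s : G.dist s w ≤ G.dist s v - (k - 1) := hw (s, G.dist s v - (k - 1)) (by simp)
  have c_wx : G.dist w x = G.dist x w := dist_comm
  have c_wy : G.dist w y = G.dist y w := dist_comm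
  have c_wv : G.dist w v = G.dist v w := dist_comm
  have c_ws : G.dist w s = G.dist s w := dist_comm
  have s_w : G.dist w w = 0 := dist_self
  have pw_x : G.dist x w = hh := by have := tri x w y; omega
  have pw_y : G.dist y w = h' := by have h1 := tri x w y; have h2 := tri y w x; omega
  have pw_s : G.dist s w = G.dist s v - (k - 1) := by have := tri s w v; omega
  -- ===== Helly application 2 : c₁ (one step towards x) =====
  obtain ⟨c₁, hc₁⟩ := helly_of_dist hH hconn
    ({(x, hh - 1), (y, h' + 1), (w, 1), (s, G.dist s v - k)} : Set (V × ℕ))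
    ⟨_, Set.mem_insert _ _⟩
    (by
      intro p hp q hq
      simp only [Set.mem_insert_iff, Set.mem_singleton_iff] at hp hq
      rcases hp with rfl | rfl | rfl | rfl <;> rcases hq with rfl | rfl | rfl | rfl <;>
        dsimp only <;> omega)
  have hc1_x : G.dist x c₁ ≤ hh - 1 := hc₁ (x, hh - 1) (by simp)
  have hc1_y : G.dist y c₁ ≤ h' + 1 := hc₁ (y, h' + 1) (by simp)
  have hc1_w : G.dist w c₁ ≤ 1 := hc₁ (w, 1) (by simp)
  have hc1_s : G.dist s c₁ ≤ G.dist s v - k := hc₁ (s, G.dist s v - k) (by simp)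
  have c_c1x : G.dist c₁ x = G.dist x c₁ := dist_comm
  have c_c1y : G.dist c₁ y = G.dist y c₁ := dist_comm
  have c_c1w : G.dist c₁ w = G.dist w c₁ := dist_comm
  have c_c1s : G.dist c₁ s = G.dist s c₁ := dist_comm
  have s_c1 : G.dist c₁ c₁ = 0 := dist_self
  have pc1_x : G.dist x c₁ = hh - 1 := by have := tri x c₁ y; omega
  have pc1_s : G.dist s c₁ = G.dist s v - k := by have := tri s c₁ w; omega
  have pc1_w : G.dist w c₁ = 1 := by
    rcases Nat.lt_or_ge (G.dist w c₁) 1 with h | _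
    · exfalso
      have hb := dzero w c₁ (by omega)
      rw [← hb] at pc1_s
      omega
    · omega
  have adj_wc1 : G.Adj w c₁ := dist_eq_one_iff_adj.mp pc1_w
  -- ===== Helly application 3 : c₂ (one step towards y) =====
  obtain ⟨c₂, hc₂⟩ := helly_of_dist hH hconn
    ({(x, hh + 1), (y, h' - 1), (w, 1), (s, G.dist s v - k)} : Set (V × ℕ))
    ⟨_, Set.mem_insert _ _⟩
    (by
      intro p hp q hq
      simp only [Set.mem_insert_iff, Set.mem_singleton_iff] at hp hq
      rcases hp with rfl | rfl | rfl | rfl <;> rcases hq with rfl | rfl | rfl | rfl <;>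
        dsimp only <;> omega)
  have hc2_x : G.dist x c₂ ≤ hh + 1 := hc₂ (x, hh + 1) (by simp)
  have hc2_y : G.dist y c₂ ≤ h' - 1 := hc₂ (y, h' - 1) (by simp)
  have hc2_w : G.dist w c₂ ≤ 1 := hc₂ (w, 1) (by simp)
  have hc2_s : G.dist s c₂ ≤ G.dist s v - k := hc₂ (s, G.dist s v - k) (by simp)
  have c_c2x : G.dist c₂ x = G.dist x c₂ := dist_comm
  have c_c2y : G.dist c₂ y = G.dist y c₂ := dist_comm
  have c_c2w : G.dist c₂ w = G.dist w c₂ := dist_comm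
  have c_c2s : G.dist c₂ s = G.dist s c₂ := dist_comm
  have s_c2 : G.dist c₂ c₂ = 0 := dist_self
  have pc2_x : G.dist x c₂ = hh + 1 := by have := tri x c₂ y; omega
  have pc2_s : G.dist s c₂ = G.dist s v - k := by have := tri s c₂ w; omega
  have pc2_w : G.dist w c₂ = 1 := by
    rcases Nat.lt_or_ge (G.dist w c₂) 1 with h | _
    · exfalso
      have hb := dzero w c₂ (by omega)
      rw [← hb] at pc2_s
      omega
    · omega
  have adj_wc2 : G.Adj w c₂ := dist_eq_one_iff_adj.mp pc2_w
  -- distance between c₁ and c₂ is exactly 2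
  have c_c1c2 : G.dist c₁ c₂ = G.dist c₂ c₁ := dist_comm
  have pc1c2 : G.dist c₁ c₂ = 2 := by
    have h1 := tri c₁ w c₂
    have h2 := tri x c₁ c₂
    omega
  -- ===== Helly application 4 : common lower neighbour m =====
  obtain ⟨m, hm⟩ := helly_of_dist hH hconn
    ({(c₁, 1), (c₂, 1), (s, G.dist s v - k - 1)} : Set (V × ℕ))
    ⟨_, Set.mem_insert _ _⟩
    (by
      intro p hp q hq
      simp only [Set.mem_insert_iff, Set.mem_singleton_iff] at hp hq
      rcases hp with rfl | rfl | rfl <;> rcases hq with rfl | rfl | rfl <;>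
        dsimp only <;> omega)
  have hm_c1 : G.dist c₁ m ≤ 1 := hm (c₁, 1) (by simp)
  have hm_c2 : G.dist c₂ m ≤ 1 := hm (c₂, 1) (by simp)
  have hm_s : G.dist s m ≤ G.dist s v - k - 1 := hm (s, G.dist s v - k - 1) (by simp)
  have c_ms : G.dist m s = G.dist s m := dist_comm
  have c_mw : G.dist m w = G.dist w m := dist_comm
  have hwm : 2 ≤ G.dist w m := by have := tri s m w; omega
  have pm_c1 : G.dist c₁ m = 1 := by
    rcases Nat.lt_or_ge (G.dist c₁ m) 1 with h | _
    · exfalso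
      have hb := dzero c₁ m (by omega)
      rw [← hb] at hm_s
      omega
    · omega
  have pm_c2 : G.dist c₂ m = 1 := by
    rcases Nat.lt_or_ge (G.dist c₂ m) 1 with h | _
    · exfalso
      have hb := dzero c₂ m (by omega)
      rw [← hb] at hm_s
      omega
    · omega
  have adj_c1m : G.Adj c₁ m := dist_eq_one_iff_adj.mp pm_c1
  have adj_c2m : G.Adj c₂ m := dist_eq_one_iff_adj.mp pm_c2
  -- non-adjacencies and distinctness
  have nadj_wm : ¬ G.Adj w m := fun h => by
    have : G.dist w m = 1 := dist_eq_one_iff_adj.mpr h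
    omega
  have nadj_c1c2 : ¬ G.Adj c₁ c₂ := fun h => by
    have : G.dist c₁ c₂ = 1 := dist_eq_one_iff_adj.mpr h
    omega
  have ne_wm : w ≠ m := fun h => by
    rw [← h] at hwm
    omega
  have ne_c1c2 : c₁ ≠ c₂ := fun h => by
    rw [← h] at pc1c2
    omega
  exact hC4 ⟨w, c₁, m, c₂, adj_wc1.ne, ne_wm, adj_wc2.ne, adj_c1m.ne, ne_c1c2,
    adj_c2m.ne.symm, adj_wc1, adj_c1m, adj_c2m.symm, adj_wc2.symm, nadj_wm, nadj_c1c2⟩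
end

section
/- Let G be a finite connected Helly graph and let S be a nonempty set of vertices of weak diameter at most two (i.e., dist(x,y) ≤ 2 in G for all x, y ∈ S). Then for any vertex v ∉ S there exists a vertex g with dist(v,g) ≤ dist(v,S) − 1 that is adjacent to every vertex of the metric projection Pr(v,S). -/
open SimpleGraph

variable {V : Type*}

lemma dist_getVert_le (G : SimpleGraph V) (hconn : G.Connected) {a b : V} (W : G.Walk a b) (k : ℕ) :
    G.dist a (W.getVert k) ≤ k ∧ G.dist (W.getVert k) b ≤ W.length - k := by
  induction W generalizing k with
  | nil => simp [SimpleGraph.Walk.getVert, SimpleGraph.dist_self]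
  | @cons x y z h q ih =>
    cases k with
    | zero =>
      simp only [SimpleGraph.Walk.getVert, SimpleGraph.dist_self, Nat.zero_le, true_and,
        Nat.sub_zero]
      exact SimpleGraph.dist_le _
    | succ k =>
      refine ⟨?_, ?_⟩
      · calc G.dist x ((q.cons h).getVert (k+1)) ≤ G.dist x y + G.dist y (q.getVert k) := by
              rw [SimpleGraph.Walk.getVert_cons_succ]; exact hconn.dist_triangle
          _ ≤ 1 + k := by
              have := (ih k).1
              have h1 : G.dist x y ≤ 1 := by
                have := SimpleGraph.dist_le (SimpleGraph.Walk.cons h SimpleGraph.Walk.nil)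
                simpa using this
              omega
          _ = k + 1 := by omega
      · rw [SimpleGraph.Walk.getVert_cons_succ]
        have := (ih k).2
        simpa [SimpleGraph.Walk.length_cons, Nat.succ_sub_succ] using this

lemma split_dist (G : SimpleGraph V) (hconn : G.Connected) (a b : V) (k1 k2 : ℕ)
    (h : G.dist a b ≤ k1 + k2) : ∃ m, G.dist a m ≤ k1 ∧ G.dist m b ≤ k2 := by
  obtain ⟨W, hW⟩ := hconn.exists_walk_length_eq_dist a b
  refine ⟨W.getVert k1, (dist_getVert_le G hconn W k1).1, ?_⟩
  have := (dist_getVert_le G hconn W k1).2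
  omega

/-- In a finite connected Helly graph, for every nonempty set `S` of
weak diameter at most two and every vertex `v ∉ S`, there is a gate `g` at
distance at most `dist(v,S) − 1` from `v` adjacent to all of `Pr(v,S)`. -/
theorem stmt7 (G : SimpleGraph V) [Fintype V] (hconn : G.Connected) (hH : IsHelly G)
    (S : Set V) (hSne : S.Nonempty) (hweak : ∀ x ∈ S, ∀ y ∈ S, G.dist x y ≤ 2)
    (v : V) (hv : v ∉ S) :
    ∃ g : V, G.dist v g ≤ distS G v S - 1 ∧ ∀ p ∈ proj G v S, G.Adj g p := by
  set d := distS G v S with hd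
  obtain ⟨s0, hs0S, hs0d⟩ : ∃ s0 ∈ S, G.dist v s0 = d := by
    have := Nat.sInf_mem (hSne.image (G.dist v))
    simpa [hd, distS] using this
  have hd1 : 1 ≤ d := by
    by_contra h
    have hd0 : d = 0 := by omega
    rw [hd0] at hs0d
    exact hv (((hconn.dist_eq_zero_iff).mp hs0d) ▸ hs0S)
  set F : Set (V × ℕ) := insert (v, d - 1) ((fun p => (p, 1)) '' proj G v S) with hF
  have hmemF : ∀ p ∈ proj G v S, (p, 1) ∈ F := fun p hp =>
    Set.mem_insert_iff.mpr (Or.inr ⟨p, hp, rfl⟩)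
  have hproj : ∀ p ∈ proj G v S, p ∈ S ∧ G.dist v p = d := fun p hp => ⟨hp.1, hp.2⟩
  have key1 : ∀ p ∈ proj G v S, (gBall G v (d - 1) ∩ gBall G p 1).Nonempty := by
    intro p hp
    obtain ⟨m, hm1, hm2⟩ := split_dist G hconn v p (d - 1) 1 (by
      rw [(hproj p hp).2]; omega)
    exact ⟨m, hm1, by simpa [gBall, SimpleGraph.dist_comm] using hm2⟩
  have key2 : ∀ p ∈ proj G v S, ∀ q ∈ proj G v S,
      (gBall G p 1 ∩ gBall G q 1).Nonempty := by
    intro p hp q hq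
    obtain ⟨m, hm1, hm2⟩ := split_dist G hconn p q 1 1
      (hweak p (hproj p hp).1 q (hproj q hq).1)
    exact ⟨m, hm1, by simpa [gBall, SimpleGraph.dist_comm] using hm2⟩
  have hpair : ∀ p ∈ F, ∀ q ∈ F, (gBall G p.1 p.2 ∩ gBall G q.1 q.2).Nonempty := by
    rintro p hp q hq
    rcases Set.mem_insert_iff.mp hp with rfl | ⟨p', hp', rfl⟩ <;>
      rcases Set.mem_insert_iff.mp hq with rfl | ⟨q', hq', rfl⟩
    · exact ⟨v, by simp [gBall, SimpleGraph.dist_self]⟩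
    · exact key1 q' hq'
    · obtain ⟨m, hm1, hm2⟩ := key1 p' hp'
      exact ⟨m, hm2, hm1⟩
    · exact key2 p' hp' q' hq'
  obtain ⟨g, hg⟩ := hH F ⟨(v, d - 1), Set.mem_insert _ _⟩ hpair
  rw [Set.mem_iInter₂] at hg
  refine ⟨g, hg (v, d - 1) (Set.mem_insert _ _), ?_⟩
  intro p hp
  have hgp : G.dist p g ≤ 1 := hg (p, 1) (hmemF p hp)
  have hgv : G.dist v g ≤ d - 1 := hg (v, d - 1) (Set.mem_insert _ _)
  have hne : g ≠ p := by
    rintro rfl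
    have := (hproj g hp).2
    omega
  have : G.dist p g = 1 := le_antisymm hgp (hconn.pos_dist_of_ne (Ne.symm hne))
  exact ((G.dist_eq_one_iff_adj).mp this).symm
end

section
/- Let G be a finite connected C4-free Helly graph with radius r, let u and w be mutually far apart vertices (i.e., e(u) = e(w) = dist(u,w)) such that dist(u,w) = diam(G) − 1 = 2r − 2, and let C = L(u, r−1, w). Then a pair of vertices (x,y) is a diametral pair of G if and only if dist(x,C) = dist(y,C) = r − 1 and Pr(x,C) ∩ Pr(y,C) = ∅. -/
open SimpleGraph

variable {V : Type*}

private lemma gExistsBetween (G : SimpleGraph V) (hconn : G.Connected) :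
    ∀ (s : ℕ) (a b : V) (t : ℕ), G.dist a b ≤ s + t → ∃ z, G.dist a z ≤ s ∧ G.dist z b ≤ t := by
  intro s
  induction s with
  | zero =>
    intro a b t h
    exact ⟨a, by simp [SimpleGraph.dist_self], by simpa using h⟩
  | succ s ih =>
    intro a b t h
    by_cases h0 : G.dist a b ≤ t
    · exact ⟨a, by simp [SimpleGraph.dist_self], h0⟩
    · have hne : G.dist a b ≠ 0 := by omega
      obtain ⟨p, hp⟩ := (hconn a b).exists_walk_length_eq_dist
      cases p with
      | nil => simp [SimpleGraph.dist_self] at hne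
      | @cons _ a' _ hadj q =>
        have hq : G.dist a' b ≤ q.length := SimpleGraph.dist_le q
        have hlen : q.length + 1 = G.dist a b := by
          simpa [SimpleGraph.Walk.length_cons] using hp
        obtain ⟨z, hz1, hz2⟩ := ih a' b t (by omega)
        refine ⟨z, ?_, hz2⟩
        have h1 : G.dist a a' = 1 := SimpleGraph.dist_eq_one_iff_adj.mpr hadj
        have := hconn.dist_triangle (u := a) (v := a') (w := z)
        omega

private lemma balls_inter (G : SimpleGraph V) (hconn : G.Connected) {a b : V} {s t : ℕ}
    (h : G.dist a b ≤ s + t) : (gBall G a s ∩ gBall G b t).Nonempty := by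
  obtain ⟨z, h1, h2⟩ := gExistsBetween G hconn s a b t h
  refine ⟨z, h1, ?_⟩
  show G.dist b z ≤ t
  rwa [SimpleGraph.dist_comm]

private lemma gHelly3 (G : SimpleGraph V) (hconn : G.Connected) (hH : IsHelly G)
    (a b c : V) (s t p : ℕ)
    (hab : G.dist a b ≤ s + t) (hac : G.dist a c ≤ s + p) (hbc : G.dist b c ≤ t + p) :
    ∃ z, G.dist a z ≤ s ∧ G.dist b z ≤ t ∧ G.dist c z ≤ p := by
  have hba : G.dist b a ≤ t + s := by rw [SimpleGraph.dist_comm]; omega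
  have hca : G.dist c a ≤ p + s := by rw [SimpleGraph.dist_comm]; omega
  have hcb : G.dist c b ≤ p + t := by rw [SimpleGraph.dist_comm]; omega
  have hpair : ∀ P ∈ ({(a,s),(b,t),(c,p)} : Set (V × ℕ)), ∀ Q ∈ ({(a,s),(b,t),(c,p)} : Set (V × ℕ)),
      (gBall G P.1 P.2 ∩ gBall G Q.1 Q.2).Nonempty := by
    intro P hP Q hQ
    simp only [Set.mem_insert_iff, Set.mem_singleton_iff] at hP hQ
    rcases hP with rfl | rfl | rfl <;> rcases hQ with rfl | rfl | rfl <;>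
      apply balls_inter G hconn <;>
      first | assumption | simp [SimpleGraph.dist_self]
  obtain ⟨z, hz⟩ := hH {(a,s),(b,t),(c,p)} ⟨(a,s), by simp⟩ hpair
  simp only [Set.mem_iInter] at hz
  exact ⟨z, hz (a,s) (by simp), hz (b,t) (by simp), hz (c,p) (by simp)⟩

private lemma gHelly4 (G : SimpleGraph V) (hconn : G.Connected) (hH : IsHelly G)
    (a b c d : V) (s t p q : ℕ)
    (hab : G.dist a b ≤ s + t) (hac : G.dist a c ≤ s + p) (had : G.dist a d ≤ s + q)
    (hbc : G.dist b c ≤ t + p) (hbd : G.dist b d ≤ t + q) (hcd : G.dist c d ≤ p + q) :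
    ∃ z, G.dist a z ≤ s ∧ G.dist b z ≤ t ∧ G.dist c z ≤ p ∧ G.dist d z ≤ q := by
  have hba : G.dist b a ≤ t + s := by rw [SimpleGraph.dist_comm]; omega
  have hca : G.dist c a ≤ p + s := by rw [SimpleGraph.dist_comm]; omega
  have hcb : G.dist c b ≤ p + t := by rw [SimpleGraph.dist_comm]; omega
  have hda : G.dist d a ≤ q + s := by rw [SimpleGraph.dist_comm]; omega
  have hdb : G.dist d b ≤ q + t := by rw [SimpleGraph.dist_comm]; omega
  have hdc : G.dist d c ≤ q + p := by rw [SimpleGraph.dist_comm]; omega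
  have hpair : ∀ P ∈ ({(a,s),(b,t),(c,p),(d,q)} : Set (V × ℕ)), ∀ Q ∈ ({(a,s),(b,t),(c,p),(d,q)} : Set (V × ℕ)),
      (gBall G P.1 P.2 ∩ gBall G Q.1 Q.2).Nonempty := by
    intro P hP Q hQ
    simp only [Set.mem_insert_iff, Set.mem_singleton_iff] at hP hQ
    rcases hP with rfl | rfl | rfl | rfl <;> rcases hQ with rfl | rfl | rfl | rfl <;>
      apply balls_inter G hconn <;>
      first | assumption | simp [SimpleGraph.dist_self]
  obtain ⟨z, hz⟩ := hH {(a,s),(b,t),(c,p),(d,q)} ⟨(a,s), by simp⟩ hpair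
  simp only [Set.mem_iInter] at hz
  exact ⟨z, hz (a,s) (by simp), hz (b,t) (by simp), hz (c,p) (by simp), hz (d,q) (by simp)⟩

private lemma gEccLe (G : SimpleGraph V) [Fintype V] (v x : V) : G.dist v x ≤ ecc G v :=
  Finset.le_sup (f := fun u => G.dist v u) (Finset.mem_univ x)

private lemma gDiamLe (G : SimpleGraph V) [Fintype V] (x y : V) : G.dist x y ≤ gdiam G :=
  le_trans (gEccLe G x y) (Finset.le_sup (Finset.mem_univ x))

/-- In a finite connected C4-free Helly graph of radius `r`, if `u, w`
are mutually far apart with `dist(u,w) = diam(G) − 1 = 2r − 2` and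
`C = L(u, r−1, w)`, then `(x,y)` is a diametral pair iff
`dist(x,C) = dist(y,C) = r − 1` and `Pr(x,C) ∩ Pr(y,C) = ∅`. -/
theorem stmt8 (G : SimpleGraph V) [Fintype V] (hconn : G.Connected) (hH : IsHelly G)
    (hC4 : C4Free G) (u w : V)
    (hu : ecc G u = G.dist u w) (hw : ecc G w = G.dist u w)
    (hd : G.dist u w + 1 = gdiam G) (hr : G.dist u w + 2 = 2 * grad G) :
    ∀ x y : V, G.dist x y = gdiam G ↔
      (distS G x (gslice G u (grad G - 1) w) = grad G - 1 ∧
       distS G y (gslice G u (grad G - 1) w) = grad G - 1 ∧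
       proj G x (gslice G u (grad G - 1) w) ∩ proj G y (gslice G u (grad G - 1) w) = ∅) := by
  -- First, the radius is at least 2.
  have hg2 : 2 ≤ grad G := by
    rcases Nat.lt_or_ge (grad G) 2 with hlt | hge
    · exfalso
      have hg1 : grad G = 1 := by omega
      have hd0 : G.dist u w = 0 := by omega
      have hecc0 : ecc G u = 0 := by rw [hu, hd0]
      have hall : ∀ v, G.dist u v = 0 := fun v =>
        Nat.le_zero.mp (hecc0 ▸ gEccLe G u v)
      have hgd : gdiam G = 0 := by
        apply Nat.le_zero.mp
        apply Finset.sup_le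
        intro x _
        apply Finset.sup_le
        intro v _
        have h1 := hconn.dist_triangle (u := x) (v := u) (w := v)
        have h2 : G.dist x u = 0 := by rw [SimpleGraph.dist_comm]; exact hall x
        have h3 := hall v
        omega
      omega
    · exact hge
  obtain ⟨m, hm⟩ : ∃ m, grad G = m + 2 := ⟨grad G - 2, by omega⟩
  have hm1 : grad G - 1 = m + 1 := by omega
  have hduw : G.dist u w = 2 * m + 2 := by omega
  have hgd : gdiam G = 2 * m + 3 := by omega
  have heu : ecc G u = 2 * m + 2 := by omega
  have hew : ecc G w = 2 * m + 2 := by omega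
  rw [hm1]
  set C : Set V := gslice G u (m + 1) w with hC
  -- membership in C
  have hCmem : ∀ c, c ∈ C ↔ (G.dist u c = m + 1 ∧ G.dist c w = m + 1) := by
    intro c
    constructor
    · rintro ⟨h1, h2⟩
      constructor
      · exact h1
      · omega
    · rintro ⟨h1, h2⟩
      exact ⟨h1, by omega⟩
  -- Lemma A: every vertex has a projection in C within distance m+1
  have hA : ∀ v : V, ∃ c, c ∈ C ∧ G.dist v c ≤ m + 1 := by
    intro v
    have h1 : G.dist u w ≤ (m+1) + (m+1) := by omega
    have h2 : G.dist u v ≤ (m+1) + (m+1) := by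
      have := gEccLe G u v; omega
    have h3 : G.dist w v ≤ (m+1) + (m+1) := by
      have := gEccLe G w v; omega
    obtain ⟨z, hz1, hz2, hz3⟩ := gHelly3 G hconn hH u w v (m+1) (m+1) (m+1) h1 h2 h3
    refine ⟨z, (hCmem z).mpr ⟨?_, ?_⟩, hz3⟩
    · have ht := hconn.dist_triangle (u := u) (v := z) (w := w)
      have hzw : G.dist z w ≤ m + 1 := by rwa [SimpleGraph.dist_comm]
      omega
    · have ht := hconn.dist_triangle (u := u) (v := z) (w := w)
      have hzw : G.dist z w ≤ m + 1 := by rwa [SimpleGraph.dist_comm]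
      omega
  -- C is a clique
  have hclique : ∀ c ∈ C, ∀ c' ∈ C, G.dist c c' ≤ 1 := by
    intro c hc c' hc'
    obtain ⟨hc1, hc2⟩ := (hCmem c).mp hc
    obtain ⟨hc1', hc2'⟩ := (hCmem c').mp hc'
    by_contra hne
    push_neg at hne
    set t := G.dist c c' with ht
    have ht2 : 2 ≤ t := hne
    have hcu : G.dist c u = m + 1 := by rw [SimpleGraph.dist_comm]; exact hc1
    have hcu' : G.dist c' u = m + 1 := by rw [SimpleGraph.dist_comm]; exact hc1'
    -- a : common neighbour of c' on the u-side
    obtain ⟨a, ha1, ha2, ha3⟩ := gHelly3 G hconn hH c c' u (t-1) 1 m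
      (by omega) (by rw [hcu]; omega) (by rw [hcu']; omega)
    -- b : common neighbour of c' on the w-side
    obtain ⟨b, hb1, hb2, hb3⟩ := gHelly3 G hconn hH c c' w (t-1) 1 m
      (by omega) (by rw [hc2]; omega) (by rw [hc2']; omega)
    have hub : 2 * m + 2 ≤ G.dist u b + G.dist b w := by
      have := hconn.dist_triangle (u := u) (v := b) (w := w)
      omega
    have hbw : G.dist b w ≤ m := by rwa [SimpleGraph.dist_comm] at hb3
    have hub2 : m + 2 ≤ G.dist u b := by omega
    have hanb : a ≠ b := by
      intro h
      rw [h] at ha3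
      omega
    have hnadjab : ¬ G.Adj a b := by
      intro hadj
      have h1 : G.dist a b = 1 := SimpleGraph.dist_eq_one_iff_adj.mpr hadj
      have h2 := hconn.dist_triangle (u := u) (v := a) (w := b)
      omega
    have hanec' : a ≠ c' := by
      intro h; rw [h] at ha3; omega
    have hadjc'a : G.Adj c' a := by
      rw [← SimpleGraph.dist_eq_one_iff_adj]
      have h0 : G.dist c' a ≠ 0 := fun h => hanec' ((hconn.dist_eq_zero_iff).mp h).symm
      omega
    have hbnec' : b ≠ c' := by
      intro h; rw [h] at hbw; omega
    have hadjc'b : G.Adj c' b := by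
      rw [← SimpleGraph.dist_eq_one_iff_adj]
      have h0 : G.dist c' b ≠ 0 := fun h => hbnec' ((hconn.dist_eq_zero_iff).mp h).symm
      omega
    -- e : common neighbour of a and b close to c
    have hab2 : G.dist a b ≤ 2 := by
      have h1 := hconn.dist_triangle (u := a) (v := c') (w := b)
      have h2 : G.dist a c' = 1 := by
        rw [SimpleGraph.dist_comm, SimpleGraph.dist_eq_one_iff_adj]; exact hadjc'a
      have h3 : G.dist c' b = 1 := SimpleGraph.dist_eq_one_iff_adj.mpr hadjc'b
      omega
    obtain ⟨e, he1, he2, he3⟩ := gHelly3 G hconn hH a b c 1 1 (t-2)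
      hab2 (by rw [SimpleGraph.dist_comm]; omega) (by rw [SimpleGraph.dist_comm]; omega)
    have hena : e ≠ a := by
      intro h
      rw [h] at he2
      rcases Nat.le_one_iff_eq_zero_or_eq_one.mp he2 with h0 | h1
      · exact hanb ((hconn.dist_eq_zero_iff).mp h0).symm
      · exact hnadjab (SimpleGraph.dist_eq_one_iff_adj.mp h1).symm
    have henb : e ≠ b := by
      intro h
      rw [h] at he1
      rcases Nat.le_one_iff_eq_zero_or_eq_one.mp he1 with h0 | h1
      · exact hanb ((hconn.dist_eq_zero_iff).mp h0)
      · exact hnadjab (SimpleGraph.dist_eq_one_iff_adj.mp h1)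
    have hadjae : G.Adj a e := by
      rw [← SimpleGraph.dist_eq_one_iff_adj]
      have h0 : G.dist a e ≠ 0 := fun h => hena ((hconn.dist_eq_zero_iff).mp h).symm
      omega
    have hadjbe : G.Adj b e := by
      rw [← SimpleGraph.dist_eq_one_iff_adj]
      have h0 : G.dist b e ≠ 0 := fun h => henb ((hconn.dist_eq_zero_iff).mp h).symm
      omega
    have hc'e : G.dist c' e ≥ 2 := by
      by_contra hlt
      push_neg at hlt
      have h1 := hconn.dist_triangle (u := c) (v := e) (w := c')
      have h2 : G.dist e c' = G.dist c' e := SimpleGraph.dist_comm ..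
      omega
    have hc'nee : c' ≠ e := by
      intro h; rw [h, SimpleGraph.dist_self] at hc'e; omega
    have hnadjc'e : ¬ G.Adj c' e := by
      intro h
      have := SimpleGraph.dist_eq_one_iff_adj.mpr h
      omega
    exact hC4 ⟨c', a, e, b, hadjc'a.ne, hc'nee, hbnec'.symm ∘ Eq.symm ∘ Eq.symm, hena.symm, hanb,
      henb, hadjc'a, hadjae, hadjbe.symm, hadjc'b.symm, hnadjc'e, hnadjab⟩
  -- every c in C is within m+2 of everything
  have hCecc : ∀ c ∈ C, ∀ v : V, G.dist c v ≤ m + 2 := by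
    intro c hc v
    obtain ⟨c', hc'C, hvc'⟩ := hA v
    have h1 := hclique c hc c' hc'C
    have h2 := hconn.dist_triangle (u := c) (v := c') (w := v)
    have h3 : G.dist c' v = G.dist v c' := SimpleGraph.dist_comm ..
    omega
  -- distS facts
  have hDistSle : ∀ (x : V) (c : V), c ∈ C → distS G x C ≤ G.dist x c := by
    intro x c hc
    exact Nat.sInf_le ⟨c, hc, rfl⟩
  intro x y
  constructor
  · -- forward direction
    intro hxy
    rw [hgd] at hxy
    have hyx : G.dist y x = 2 * m + 3 := by rw [SimpleGraph.dist_comm]; exact hxy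
    have hlow : ∀ z z' : V, G.dist z z' = 2 * m + 3 → ∀ c ∈ C, m + 1 ≤ G.dist z c := by
      intro z z' hzy c hc
      by_contra hlt
      push_neg at hlt
      have h1 := hCecc c hc z'
      have h2 := hconn.dist_triangle (u := z) (v := c) (w := z')
      omega
    have hdistS : ∀ z z' : V, G.dist z z' = 2 * m + 3 → distS G z C = m + 1 := by
      intro z z' hzy
      obtain ⟨c₀, hc₀C, hc₀d⟩ := hA z
      have heq : G.dist z c₀ = m + 1 := le_antisymm hc₀d (hlow z z' hzy c₀ hc₀C)
      apply le_antisymm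
      · exact heq ▸ hDistSle z c₀ hc₀C
      · apply le_csInf ⟨_, Set.mem_image_of_mem _ hc₀C⟩
        rintro n ⟨c, hcC, rfl⟩
        exact hlow z z' hzy c hcC
    have hdx : distS G x C = m + 1 := hdistS x y hxy
    have hdy : distS G y C = m + 1 := hdistS y x hyx
    refine ⟨hdx, hdy, ?_⟩
    ext c
    simp only [Set.mem_inter_iff, Set.mem_empty_iff_false, iff_false]
    rintro ⟨⟨hcC, hcx⟩, ⟨_, hcy⟩⟩
    rw [hdx] at hcx
    rw [hdy] at hcy
    have h1 := hconn.dist_triangle (u := x) (v := c) (w := y)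
    have h2 : G.dist c y = G.dist y c := SimpleGraph.dist_comm ..
    omega
  · -- backward direction
    rintro ⟨hx, hy, hdisj⟩
    have hle : G.dist x y ≤ 2 * m + 3 := by
      have := gDiamLe G x y; omega
    rcases Nat.lt_or_ge (G.dist x y) (2 * m + 3) with hlt | hge
    · exfalso
      have hxy2 : G.dist x y ≤ 2 * m + 2 := by omega
      obtain ⟨z, hz1, hz2, hz3, hz4⟩ := gHelly4 G hconn hH x y u w (m+1) (m+1) (m+1) (m+1)
        (by omega)
        (by have h := gEccLe G u x; rw [SimpleGraph.dist_comm]; omega)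
        (by have h := gEccLe G w x; rw [SimpleGraph.dist_comm]; omega)
        (by have h := gEccLe G u y; rw [SimpleGraph.dist_comm]; omega)
        (by have h := gEccLe G w y; rw [SimpleGraph.dist_comm]; omega)
        (by omega)
      have hzC : z ∈ C := by
        apply (hCmem z).mpr
        have ht := hconn.dist_triangle (u := u) (v := z) (w := w)
        have hzw : G.dist z w ≤ m + 1 := by rwa [SimpleGraph.dist_comm]
        constructor <;> omega
      have hxz : G.dist x z = m + 1 := by
        have h1 := hDistSle x z hzC
        rw [hx] at h1
        omega
      have hyz : G.dist y z = m + 1 := by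
        have h1 := hDistSle y z hzC
        rw [hy] at h1
        omega
      have : z ∈ proj G x C ∩ proj G y C :=
        ⟨⟨hzC, by rw [hxz, hx]⟩, ⟨hzC, by rw [hyz, hy]⟩⟩
      rw [hdisj] at this
      exact this
    · omega
end

section
/- In a finite connected C4-free Helly graph G, for any clique C and any two adjacent vertices s, t ∈ N(C) (the open neighbourhood of C), the metric projections Pr(s,C) and Pr(t,C) are comparable: either Pr(s,C) ⊆ Pr(t,C) or Pr(t,C) ⊆ Pr(s,C). -/
open SimpleGraph

variable {V : Type*}

lemma mem_proj_iff (G : SimpleGraph V) (hconn : G.Connected) (C : Set V) (v : V)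
    (hv : v ∈ nbhdSet G C) (c : V) : c ∈ proj G v C ↔ c ∈ C ∧ G.Adj v c := by
  obtain ⟨hvC, c₀, hc₀, hadj⟩ := hv
  have hd1 : distS G v C = 1 := by
    have h1 : (1 : ℕ) ∈ G.dist v '' C := ⟨c₀, hc₀, (SimpleGraph.dist_eq_one_iff_adj).2 hadj⟩
    have hle : sInf (G.dist v '' C) ≤ 1 := Nat.sInf_le h1
    have hne : sInf (G.dist v '' C) ≠ 0 := by
      intro h0
      have hmem := Nat.sInf_mem (⟨1, h1⟩ : (G.dist v '' C).Nonempty)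
      rw [h0] at hmem
      obtain ⟨c', hc', hd⟩ := hmem
      have : v = c' := ((hconn.preconnected v c').dist_eq_zero_iff).1 hd
      exact hvC (this ▸ hc')
    have : sInf (G.dist v '' C) = 1 := by omega
    simpa [distS] using this
  constructor
  · rintro ⟨hcC, hd⟩
    exact ⟨hcC, (SimpleGraph.dist_eq_one_iff_adj).1 (by rw [hd, hd1])⟩
  · rintro ⟨hcC, hadj'⟩
    exact ⟨hcC, by rw [(SimpleGraph.dist_eq_one_iff_adj).2 hadj', hd1]⟩

/-- In a finite connected C4-free Helly graph, for any clique `C` and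
adjacent vertices `s, t ∈ N(C)`, the projections `Pr(s,C)` and `Pr(t,C)` are
comparable. -/
theorem stmt9 (G : SimpleGraph V) [Fintype V] (hconn : G.Connected) (hH : IsHelly G)
    (hC4 : C4Free G) (C : Set V) (hC : G.IsClique C)
    (s t : V) (hs : s ∈ nbhdSet G C) (ht : t ∈ nbhdSet G C) (hst : G.Adj s t) :
    proj G s C ⊆ proj G t C ∨ proj G t C ⊆ proj G s C := by
  by_contra hcon
  push_neg at hcon
  obtain ⟨h1, h2⟩ := hcon
  obtain ⟨a, has, hat⟩ := Set.not_subset.1 h1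
  obtain ⟨b, hbt, hbs⟩ := Set.not_subset.1 h2
  rw [mem_proj_iff G hconn C s hs] at has hbs
  rw [mem_proj_iff G hconn C t ht] at hat hbt
  push_neg at hat hbs
  obtain ⟨haC, hsa⟩ := has
  obtain ⟨hbC, htb⟩ := hbt
  have hta : ¬ G.Adj t a := hat haC
  have hsb : ¬ G.Adj s b := hbs hbC
  have hsC := hs.1
  have htC := ht.1
  have hab : G.Adj a b := hC haC hbC (by rintro rfl; exact hsb hsa)
  exact hC4 ⟨s, a, b, t, hsa.ne, fun h => hsC (h ▸ hbC), hst.ne,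
    fun h => hsb (h ▸ hsa), fun h => htC (h ▸ haC),
    fun h => htC (h ▸ hbC), hsa, hab, htb.symm, hst.symm, hsb, fun h => hta h.symm⟩
end

section
/- Let u and w be two vertices in a finite connected C4-free Helly graph G such that dist(u,w) = 2r − 2 for some integer r ≥ 1, let C = L(u, r−1, w), and let S ⊆ N(C) be a stable set. Then the induced subgraph H = G[C ∪ S] is a split Helly graph: its vertex set partitions into the clique C and the stable set S, and every family of pairwise intersecting balls of H has a nonempty common intersection. -/
open SimpleGraph

variable {V : Type*}

section AuxLemmas
variable {G : SimpleGraph V} {x y : V}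

lemma exists_walk_getVert (p : G.Walk x y) (i : ℕ) :
    ∃ q : G.Walk x (p.getVert i), q.length ≤ i := by
  induction p generalizing i with
  | nil => exact ⟨Walk.nil, Nat.zero_le _⟩
  | @cons a b c h q ih =>
    cases i with
    | zero => exact ⟨Walk.nil, Nat.zero_le _⟩
    | succ n =>
      obtain ⟨q', hq'⟩ := ih n
      exact ⟨(Walk.cons h q').copy rfl (Walk.getVert_cons_succ q h).symm,
        by simpa using Nat.succ_le_succ hq'⟩

lemma dist_getVert_left (p : G.Walk x y) (i : ℕ) : G.dist x (p.getVert i) ≤ i := by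
  obtain ⟨q, hq⟩ := exists_walk_getVert p i
  exact (SimpleGraph.dist_le q).trans hq

lemma dist_getVert_right (p : G.Walk x y) (i : ℕ) :
    G.dist (p.getVert i) y ≤ p.length - i := by
  induction p generalizing i with
  | nil => exact Nat.le_trans (Nat.le_of_eq SimpleGraph.dist_self) (Nat.zero_le _)
  | @cons a b c h q ih =>
    cases i with
    | zero => simpa using SimpleGraph.dist_le (Walk.cons h q)
    | succ n =>
      rw [Walk.getVert_cons_succ, Walk.length_cons, Nat.succ_sub_succ]
      exact ih n

lemma exists_between_dist (hconn : G.Connected) (x y : V) (i : ℕ) :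
    ∃ z : V, G.dist x z ≤ i ∧ G.dist z y ≤ G.dist x y - i := by
  obtain ⟨p, hp⟩ := hconn.exists_walk_length_eq_dist x y
  exact ⟨p.getVert i, dist_getVert_left p i, hp ▸ dist_getVert_right p i⟩

lemma adj_dist_le_one (h : G.Adj x y) : G.dist x y ≤ 1 := by
  simpa using SimpleGraph.dist_le h.toWalk

lemma induce_adj_iff {s : Set V} {a b : ↥s} : (G.induce s).Adj a b ↔ G.Adj a.val b.val :=
  Iff.rfl

lemma induce_walk_exists {s : Set V} {a b : ↥s} (p : (G.induce s).Walk a b) :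
    ∃ q : G.Walk a.val b.val, q.length = p.length := by
  induction p with
  | nil => exact ⟨Walk.nil, rfl⟩
  | @cons a c b h q ih =>
    obtain ⟨q', hq'⟩ := ih
    exact ⟨Walk.cons (induce_adj_iff.mp h) q', by simp [hq']⟩

end AuxLemmas

/-- In a finite connected C4-free Helly graph, if `dist(u,w) = 2r − 2`,
`C = L(u, r−1, w)` and `S ⊆ N(C)` is a stable set, then the induced subgraph
`H = G[C ∪ S]` is a split Helly graph: its vertex set partitions into the clique
`C` and the stable set `S`, and `H` is Helly. -/
theorem stmt10 (G : SimpleGraph V) [Fintype V] (hconn : G.Connected) (hH : IsHelly G)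
    (hC4 : C4Free G) (u w : V) (r : ℕ) (hr : 1 ≤ r) (hd : G.dist u w = 2 * r - 2)
    (S : Set V) (hS : S ⊆ nbhdSet G (gslice G u (r - 1) w))
    (hstable : ∀ x ∈ S, ∀ y ∈ S, ¬ G.Adj x y) :
    Disjoint (gslice G u (r - 1) w) S ∧
    G.IsClique (gslice G u (r - 1) w) ∧
    IsHelly (G.induce (gslice G u (r - 1) w ∪ S)) := by
  classical
  set C : Set V := gslice G u (r - 1) w with hCdef
  have hCmem : ∀ x ∈ C, G.dist u x = r - 1 ∧ G.dist x w = r - 1 := by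
    intro x hx
    obtain ⟨h1, h2⟩ := hx
    exact ⟨h1, by omega⟩
  have mkC : ∀ z : V, G.dist u z ≤ r - 1 → G.dist w z ≤ r - 1 → z ∈ C := by
    intro z h1 h2
    have tri : G.dist u w ≤ G.dist u z + G.dist z w := hconn.dist_triangle
    have hc : G.dist w z = G.dist z w := SimpleGraph.dist_comm
    exact ⟨by omega, by omega⟩
  have hdisj : Disjoint C S := Set.disjoint_left.mpr (fun a ha haS => (hS haS).1 ha)
  -- the clique part
  have key : ∀ d : ℕ, ∀ x, x ∈ C → ∀ y, y ∈ C → G.dist x y = d → d ≤ 1 := by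
    intro d
    induction d using Nat.strong_induction_on with
    | _ d IH =>
      intro x hx y hy hdxy
      by_contra hgt
      push_neg at hgt
      obtain ⟨hux, hxw⟩ := hCmem x hx
      obtain ⟨huy, hyw⟩ := hCmem y hy
      have hxyne : x ≠ y := by
        rintro rfl
        rw [SimpleGraph.dist_self] at hdxy; omega
      have hr2 : 2 ≤ r := by
        by_contra hrlt
        have hx0 : u = x := hconn.dist_eq_zero_iff.mp (by omega)
        have hy0 : u = y := hconn.dist_eq_zero_iff.mp (by omega)
        exact hxyne (hx0.symm.trans hy0)
      have hwx : G.dist w x = r - 1 := by rw [SimpleGraph.dist_comm]; exact hxw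
      have hwy : G.dist w y = r - 1 := by rw [SimpleGraph.dist_comm]; exact hyw
      rcases Nat.lt_or_ge d 3 with hd3 | hd3
      · -- d = 2 : C4 argument
        have hd2 : d = 2 := by omega
        subst hd2
        obtain ⟨m, hm1, hm2⟩ := exists_between_dist hconn x y 1
        rw [hdxy] at hm2
        obtain ⟨z1, hz1u, hz1x⟩ := exists_between_dist hconn u x (r - 2)
        rw [hux] at hz1x
        obtain ⟨z2, hz2u, hz2y⟩ := exists_between_dist hconn u y (r - 2)
        rw [huy] at hz2y
        obtain ⟨z3, hz3w, hz3x⟩ := exists_between_dist hconn w x (r - 2)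
        rw [hwx] at hz3x
        obtain ⟨z4, hz4w, hz4y⟩ := exists_between_dist hconn w y (r - 2)
        rw [hwy] at hz4y
        -- first Helly family
        have pairA : ∀ p ∈ ({(x, 1), (y, 1), (u, r - 2)} : Set (V × ℕ)), ∀ q ∈
            ({(x, 1), (y, 1), (u, r - 2)} : Set (V × ℕ)),
            (gBall G p.1 p.2 ∩ gBall G q.1 q.2).Nonempty := by
          intro p hp q hq
          simp only [Set.mem_insert_iff, Set.mem_singleton_iff] at hp hq
          rcases hp with rfl | rfl | rfl <;> rcases hq with rfl | rfl | rfl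
          · exact ⟨x, by simp [gBall, SimpleGraph.dist_self], by simp [gBall, SimpleGraph.dist_self]⟩
          · exact ⟨m, hm1, by show G.dist y m ≤ 1; rw [SimpleGraph.dist_comm]; omega⟩
          · exact ⟨z1, by show G.dist x z1 ≤ 1; rw [SimpleGraph.dist_comm]; omega, hz1u⟩
          · exact ⟨m, by show G.dist y m ≤ 1; rw [SimpleGraph.dist_comm]; omega, hm1⟩
          · exact ⟨y, by simp [gBall, SimpleGraph.dist_self], by simp [gBall, SimpleGraph.dist_self]⟩
          · exact ⟨z2, by show G.dist y z2 ≤ 1; rw [SimpleGraph.dist_comm]; omega, hz2u⟩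
          · exact ⟨z1, hz1u, by show G.dist x z1 ≤ 1; rw [SimpleGraph.dist_comm]; omega⟩
          · exact ⟨z2, hz2u, by show G.dist y z2 ≤ 1; rw [SimpleGraph.dist_comm]; omega⟩
          · exact ⟨u, by simp [gBall, SimpleGraph.dist_self], by simp [gBall, SimpleGraph.dist_self]⟩
        obtain ⟨a, ha⟩ := hH _ ⟨(x, 1), by simp⟩ pairA
        have hamp := Set.mem_iInter₂.mp ha
        have hax : G.dist x a ≤ 1 := hamp (x, 1) (by simp)
        have hay : G.dist y a ≤ 1 := hamp (y, 1) (by simp)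
        have hau : G.dist u a ≤ r - 2 := hamp (u, r - 2) (by simp)
        have haxne : x ≠ a := by rintro rfl; omega
        have hayne : y ≠ a := by rintro rfl; omega
        have hadjxa : G.Adj x a := by
          have := hconn.pos_dist_of_ne haxne
          exact SimpleGraph.dist_eq_one_iff_adj.mp (by omega)
        have hadjya : G.Adj y a := by
          have := hconn.pos_dist_of_ne hayne
          exact SimpleGraph.dist_eq_one_iff_adj.mp (by omega)
        -- second Helly family
        have pairB : ∀ p ∈ ({(x, 1), (y, 1), (w, r - 2)} : Set (V × ℕ)), ∀ q ∈
            ({(x, 1), (y, 1), (w, r - 2)} : Set (V × ℕ)),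
            (gBall G p.1 p.2 ∩ gBall G q.1 q.2).Nonempty := by
          intro p hp q hq
          simp only [Set.mem_insert_iff, Set.mem_singleton_iff] at hp hq
          rcases hp with rfl | rfl | rfl <;> rcases hq with rfl | rfl | rfl
          · exact ⟨x, by simp [gBall, SimpleGraph.dist_self], by simp [gBall, SimpleGraph.dist_self]⟩
          · exact ⟨m, hm1, by show G.dist y m ≤ 1; rw [SimpleGraph.dist_comm]; omega⟩
          · exact ⟨z3, by show G.dist x z3 ≤ 1; rw [SimpleGraph.dist_comm]; omega, hz3w⟩
          · exact ⟨m, by show G.dist y m ≤ 1; rw [SimpleGraph.dist_comm]; omega, hm1⟩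
          · exact ⟨y, by simp [gBall, SimpleGraph.dist_self], by simp [gBall, SimpleGraph.dist_self]⟩
          · exact ⟨z4, by show G.dist y z4 ≤ 1; rw [SimpleGraph.dist_comm]; omega, hz4w⟩
          · exact ⟨z3, hz3w, by show G.dist x z3 ≤ 1; rw [SimpleGraph.dist_comm]; omega⟩
          · exact ⟨z4, hz4w, by show G.dist y z4 ≤ 1; rw [SimpleGraph.dist_comm]; omega⟩
          · exact ⟨w, by simp [gBall, SimpleGraph.dist_self], by simp [gBall, SimpleGraph.dist_self]⟩
        obtain ⟨b, hb⟩ := hH _ ⟨(x, 1), by simp⟩ pairB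
        have hbmp := Set.mem_iInter₂.mp hb
        have hbx : G.dist x b ≤ 1 := hbmp (x, 1) (by simp)
        have hby : G.dist y b ≤ 1 := hbmp (y, 1) (by simp)
        have hbw : G.dist w b ≤ r - 2 := hbmp (w, r - 2) (by simp)
        have hbxne : x ≠ b := by rintro rfl; omega
        have hbyne : y ≠ b := by rintro rfl; omega
        have hadjxb : G.Adj x b := by
          have := hconn.pos_dist_of_ne hbxne
          exact SimpleGraph.dist_eq_one_iff_adj.mp (by omega)
        have hadjyb : G.Adj y b := by
          have := hconn.pos_dist_of_ne hbyne
          exact SimpleGraph.dist_eq_one_iff_adj.mp (by omega)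
        have habne : a ≠ b := by
          rintro rfl
          have tri : G.dist u w ≤ G.dist u a + G.dist a w := hconn.dist_triangle
          have hc : G.dist a w = G.dist w a := SimpleGraph.dist_comm
          omega
        have hnab : ¬ G.Adj a b := by
          intro hab
          have h1 : G.dist a b ≤ 1 := adj_dist_le_one hab
          have tri1 : G.dist u w ≤ G.dist u a + G.dist a w := hconn.dist_triangle
          have tri2 : G.dist a w ≤ G.dist a b + G.dist b w := hconn.dist_triangle
          have hc : G.dist b w = G.dist w b := SimpleGraph.dist_comm
          omega
        have hnxy : ¬ G.Adj x y := fun h => by have := adj_dist_le_one h; omega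
        exact hC4 ⟨x, a, y, b, hadjxa.ne, hxyne, hadjxb.ne, hadjya.ne', habne, hadjyb.ne,
          hadjxa, hadjya.symm, hadjyb, hadjxb.symm, hnxy, hnab⟩
      · -- d ≥ 3 : contraction step
        obtain ⟨m, hm1, hm2⟩ := exists_between_dist hconn x y (d - 1)
        rw [hdxy] at hm2
        have pairD : ∀ p ∈ ({(x, d - 1), (y, 1), (u, r - 1), (w, r - 1)} : Set (V × ℕ)), ∀ q ∈
            ({(x, d - 1), (y, 1), (u, r - 1), (w, r - 1)} : Set (V × ℕ)),
            (gBall G p.1 p.2 ∩ gBall G q.1 q.2).Nonempty := by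
          intro p hp q hq
          simp only [Set.mem_insert_iff, Set.mem_singleton_iff] at hp hq
          rcases hp with rfl | rfl | rfl | rfl <;> rcases hq with rfl | rfl | rfl | rfl
          · exact ⟨x, by simp [gBall, SimpleGraph.dist_self], by simp [gBall, SimpleGraph.dist_self]⟩
          · exact ⟨m, hm1, by show G.dist y m ≤ 1; rw [SimpleGraph.dist_comm]; omega⟩
          · exact ⟨x, by simp [gBall, SimpleGraph.dist_self], by show G.dist u x ≤ r - 1; omega⟩
          · exact ⟨x, by simp [gBall, SimpleGraph.dist_self], by show G.dist w x ≤ r - 1; omega⟩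
          · exact ⟨m, by show G.dist y m ≤ 1; rw [SimpleGraph.dist_comm]; omega, hm1⟩
          · exact ⟨y, by simp [gBall, SimpleGraph.dist_self], by simp [gBall, SimpleGraph.dist_self]⟩
          · exact ⟨y, by simp [gBall, SimpleGraph.dist_self], by show G.dist u y ≤ r - 1; omega⟩
          · exact ⟨y, by simp [gBall, SimpleGraph.dist_self], by show G.dist w y ≤ r - 1; omega⟩
          · exact ⟨x, by show G.dist u x ≤ r - 1; omega, by simp [gBall, SimpleGraph.dist_self]⟩
          · exact ⟨y, by show G.dist u y ≤ r - 1; omega, by simp [gBall, SimpleGraph.dist_self]⟩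
          · exact ⟨u, by simp [gBall, SimpleGraph.dist_self], by simp [gBall, SimpleGraph.dist_self]⟩
          · exact ⟨x, by show G.dist u x ≤ r - 1; omega, by show G.dist w x ≤ r - 1; omega⟩
          · exact ⟨x, by show G.dist w x ≤ r - 1; omega, by simp [gBall, SimpleGraph.dist_self]⟩
          · exact ⟨y, by show G.dist w y ≤ r - 1; omega, by simp [gBall, SimpleGraph.dist_self]⟩
          · exact ⟨x, by show G.dist w x ≤ r - 1; omega, by show G.dist u x ≤ r - 1; omega⟩
          · exact ⟨w, by simp [gBall, SimpleGraph.dist_self], by simp [gBall, SimpleGraph.dist_self]⟩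
        obtain ⟨z, hz⟩ := hH _ ⟨(y, 1), by simp⟩ pairD
        have hzmp := Set.mem_iInter₂.mp hz
        have hzx : G.dist x z ≤ d - 1 := hzmp (x, d - 1) (by simp)
        have hzy : G.dist y z ≤ 1 := hzmp (y, 1) (by simp)
        have hzu : G.dist u z ≤ r - 1 := hzmp (u, r - 1) (by simp)
        have hzw : G.dist w z ≤ r - 1 := hzmp (w, r - 1) (by simp)
        have hzC : z ∈ C := mkC z hzu hzw
        have tri : G.dist x y ≤ G.dist x z + G.dist z y := hconn.dist_triangle
        have hc : G.dist z y = G.dist y z := SimpleGraph.dist_comm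
        have h2le : 2 ≤ G.dist x z := by omega
        have := IH (G.dist x z) (by omega) x hx z hzC rfl
        omega
  have hclique : G.IsClique C := by
    intro x hx y hy hne
    have h1 := key (G.dist x y) x hx y hy rfl
    have h0 := hconn.pos_dist_of_ne hne
    exact SimpleGraph.dist_eq_one_iff_adj.mp (by omega)
  refine ⟨hdisj, hclique, ?_⟩
  -- Helly property of the induced split graph
  obtain ⟨c0, hc0u, hc0w'⟩ := exists_between_dist hconn u w (r - 1)
  rw [hd] at hc0w'
  have hc0C : c0 ∈ C := mkC c0 hc0u (by rw [SimpleGraph.dist_comm]; omega)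
  have hnbr : ∀ s ∈ S, ∃ c ∈ C, G.Adj s c := fun s hs => (hS hs).2
  have hadjH : ∀ {a b : ↥(C ∪ S)}, G.Adj a.val b.val → (G.induce (C ∪ S)).Adj a b :=
    fun h => h
  have hdCC : ∀ a b : ↥(C ∪ S), a.val ∈ C → b.val ∈ C → (G.induce (C ∪ S)).dist a b ≤ 1 := by
    intro a b ha hb
    by_cases hab : a = b
    · subst hab; rw [SimpleGraph.dist_self]; omega
    · exact adj_dist_le_one (hadjH (hclique ha hb (fun hv => hab (Subtype.ext hv))))
  have hdSC : ∀ a b : ↥(C ∪ S), a.val ∈ S → b.val ∈ C → (G.induce (C ∪ S)).dist a b ≤ 2 := by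
    intro a b ha hb
    obtain ⟨c, hcC, hadj⟩ := hnbr a.val ha
    by_cases hcb : c = b.val
    · subst hcb
      exact (adj_dist_le_one (hadjH hadj)).trans (by omega)
    · have h2 : G.Adj c b.val := hclique hcC hb hcb
      simpa using SimpleGraph.dist_le
        (Walk.cons (hadjH hadj : (G.induce (C ∪ S)).Adj a ⟨c, Or.inl hcC⟩)
          (Walk.cons (hadjH h2) Walk.nil))
  have hreachC : ∀ a : ↥(C ∪ S), a.val ∈ C →
      (G.induce (C ∪ S)).Reachable a ⟨c0, Or.inl hc0C⟩ := by
    intro a ha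
    by_cases h : a.val = c0
    · have : a = (⟨c0, Or.inl hc0C⟩ : ↥(C ∪ S)) := Subtype.ext h
      rw [this]
    · exact (hadjH (hclique ha hc0C h)).reachable
  have hreachAll : ∀ a : ↥(C ∪ S), (G.induce (C ∪ S)).Reachable a ⟨c0, Or.inl hc0C⟩ := by
    intro a
    rcases (Set.mem_union _ _ _).mp a.2 with ha | ha
    · exact hreachC a ha
    · obtain ⟨c, hcC, hadj⟩ := hnbr a.val ha
      exact ((hadjH hadj : (G.induce (C ∪ S)).Adj a ⟨c, Or.inl hcC⟩).reachable).trans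
        (hreachC ⟨c, Or.inl hcC⟩ hcC)
  have hHconn : (G.induce (C ∪ S)).Connected := by
    rw [connected_iff]
    exact ⟨fun a b => (hreachAll a).trans (hreachAll b).symm, ⟨⟨c0, Or.inl hc0C⟩⟩⟩
  have hGle : ∀ a b : ↥(C ∪ S), G.dist a.val b.val ≤ (G.induce (C ∪ S)).dist a b := by
    intro a b
    obtain ⟨p, hp⟩ := hHconn.exists_walk_length_eq_dist a b
    obtain ⟨q, hq⟩ := induce_walk_exists p
    exact le_of_le_of_eq (SimpleGraph.dist_le q) (hq.trans hp)
  intro F hFne hFpair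
  by_cases h0 : ∃ p ∈ F, p.2 = 0
  · obtain ⟨p, hpF, hp0⟩ := h0
    refine ⟨p.1, Set.mem_iInter₂.mpr ?_⟩
    intro q hqF
    obtain ⟨v, hv1, hv2⟩ := hFpair q hqF p hpF
    have hv2' : (G.induce (C ∪ S)).dist p.1 v ≤ 0 := hp0 ▸ hv2
    have hveq : p.1 = v := hHconn.dist_eq_zero_iff.mp (Nat.le_zero.mp hv2')
    rwa [← hveq] at hv1
  · push_neg at h0
    have pairF' : ∀ p ∈ ({q | ∃ a : ↥(C ∪ S), (a, 1) ∈ F ∧ a.val ∈ S ∧ q = (a.val, 1)} ∪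
        {(u, r - 1), (w, r - 1)} : Set (V × ℕ)), ∀ q ∈
        ({q | ∃ a : ↥(C ∪ S), (a, 1) ∈ F ∧ a.val ∈ S ∧ q = (a.val, 1)} ∪
        {(u, r - 1), (w, r - 1)} : Set (V × ℕ)),
        (gBall G p.1 p.2 ∩ gBall G q.1 q.2).Nonempty := by
      intro p hp q hq
      rcases (Set.mem_union _ _ _).mp hp with ⟨a, haF, haS, rfl⟩ | hp2
      · rcases (Set.mem_union _ _ _).mp hq with ⟨b, hbF, hbS, rfl⟩ | hq2
        · obtain ⟨v, hv1, hv2⟩ := hFpair (a, 1) haF (b, 1) hbF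
          exact ⟨v.val, (hGle a v).trans hv1, (hGle b v).trans hv2⟩
        · obtain ⟨c, hcC, hadj⟩ := hnbr a.val haS
          obtain ⟨hcu, hcw⟩ := hCmem c hcC
          simp only [Set.mem_insert_iff, Set.mem_singleton_iff] at hq2
          rcases hq2 with rfl | rfl
          · exact ⟨c, adj_dist_le_one hadj, by show G.dist u c ≤ r - 1; omega⟩
          · exact ⟨c, adj_dist_le_one hadj,
              by show G.dist w c ≤ r - 1; rw [SimpleGraph.dist_comm]; omega⟩
      · rcases (Set.mem_union _ _ _).mp hq with ⟨b, hbF, hbS, rfl⟩ | hq2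
        · obtain ⟨c, hcC, hadj⟩ := hnbr b.val hbS
          obtain ⟨hcu, hcw⟩ := hCmem c hcC
          simp only [Set.mem_insert_iff, Set.mem_singleton_iff] at hp2
          rcases hp2 with rfl | rfl
          · exact ⟨c, by show G.dist u c ≤ r - 1; omega, adj_dist_le_one hadj⟩
          · exact ⟨c, by show G.dist w c ≤ r - 1; rw [SimpleGraph.dist_comm]; omega,
              adj_dist_le_one hadj⟩
        · obtain ⟨hcu, hcw⟩ := hCmem c0 hc0C
          simp only [Set.mem_insert_iff, Set.mem_singleton_iff] at hp2 hq2
          rcases hp2 with rfl | rfl <;> rcases hq2 with rfl | rfl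
          · exact ⟨c0, by show G.dist u c0 ≤ r - 1; omega, by show G.dist u c0 ≤ r - 1; omega⟩
          · exact ⟨c0, by show G.dist u c0 ≤ r - 1; omega,
              by show G.dist w c0 ≤ r - 1; rw [SimpleGraph.dist_comm]; omega⟩
          · exact ⟨c0, by show G.dist w c0 ≤ r - 1; rw [SimpleGraph.dist_comm]; omega,
              by show G.dist u c0 ≤ r - 1; omega⟩
          · exact ⟨c0, by show G.dist w c0 ≤ r - 1; rw [SimpleGraph.dist_comm]; omega,
              by show G.dist w c0 ≤ r - 1; rw [SimpleGraph.dist_comm]; omega⟩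
    obtain ⟨z, hz⟩ := hH _ ⟨(u, r - 1), (Set.mem_union _ _ _).mpr (Or.inr (by simp))⟩ pairF'
    have hzmp := Set.mem_iInter₂.mp hz
    have hzu : G.dist u z ≤ r - 1 :=
      hzmp (u, r - 1) ((Set.mem_union _ _ _).mpr (Or.inr (by simp)))
    have hzw : G.dist w z ≤ r - 1 :=
      hzmp (w, r - 1) ((Set.mem_union _ _ _).mpr (Or.inr (by simp)))
    have hzC : z ∈ C := mkC z hzu hzw
    have hzS : ∀ a : ↥(C ∪ S), (a, 1) ∈ F → a.val ∈ S → G.Adj a.val z := by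
      intro a haF haS
      have h1 : G.dist a.val z ≤ 1 :=
        hzmp (a.val, 1) ((Set.mem_union _ _ _).mpr (Or.inl ⟨a, haF, haS, rfl⟩))
      have hne : a.val ≠ z := fun h => (Set.disjoint_left.mp hdisj (h.symm ▸ hzC)) haS
      have := hconn.pos_dist_of_ne hne
      exact SimpleGraph.dist_eq_one_iff_adj.mp (by omega)
    refine ⟨⟨z, Or.inl hzC⟩, Set.mem_iInter₂.mpr ?_⟩
    intro q hqF
    have hq2 : 1 ≤ q.2 := by have := h0 q hqF; omega
    show (G.induce (C ∪ S)).dist q.1 ⟨z, Or.inl hzC⟩ ≤ q.2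
    rcases (Set.mem_union _ _ _).mp q.1.2 with hqC | hqS
    · exact (hdCC q.1 _ hqC hzC).trans hq2
    · by_cases hq1 : q.2 = 1
      · have hq' : (q.1, 1) ∈ F := by rw [← hq1, Prod.mk.eta]; exact hqF
        have hadj := hzS q.1 hq' hqS
        exact (adj_dist_le_one (hadjH hadj)).trans hq2
      · have h2 : 2 ≤ q.2 := by omega
        exact (hdSC q.1 _ hqS hzC).trans h2
end

section
/- A finite connected Helly graph G has diameter at most 2 if and only if G contains a universal vertex, i.e., a vertex adjacent to all other vertices. -/
open SimpleGraph

variable {V : Type*}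

/-- A finite connected Helly graph has diameter at most 2 iff it
contains a universal vertex. -/
theorem stmt11 (G : SimpleGraph V) [Fintype V] (hconn : G.Connected) (hH : IsHelly G) :
    gdiam G ≤ 2 ↔ ∃ v : V, ∀ u : V, u ≠ v → G.Adj v u := by
  have hne : Nonempty V := hconn.nonempty
  constructor
  · intro hd
    have hdist : ∀ a b : V, G.dist a b ≤ 2 := fun a b =>
      le_trans (le_trans (Finset.le_sup (Finset.mem_univ b))
        (Finset.le_sup (f := ecc G) (Finset.mem_univ a))) hd
    set F : Set (V × ℕ) := Set.range (fun v => (v, 1)) with hF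
    obtain ⟨c, hc⟩ := hH F ⟨(Classical.arbitrary V, 1), ⟨_, rfl⟩⟩ (by
      rintro _ ⟨a, rfl⟩ _ ⟨b, rfl⟩
      simp only [gBall]
      rcases Nat.lt_or_ge (G.dist a b) 2 with h2 | h2
      · exact ⟨a, by simp [SimpleGraph.dist_self], by
          rw [Set.mem_setOf_eq, SimpleGraph.dist_comm]; omega⟩
      · have h2' : G.dist a b = 2 := le_antisymm (hdist a b) h2
        obtain ⟨p, hp⟩ := (hconn a b).exists_walk_length_eq_dist
        rw [h2'] at hp
        refine ⟨p.getVert 1, ?_, ?_⟩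
        · have hadj : G.Adj a (p.getVert 1) := by
            have := p.adj_getVert_succ (i := 0) (by omega)
            simpa using this
          exact le_of_eq (SimpleGraph.dist_eq_one_iff_adj.mpr hadj)
        · have hadj : G.Adj (p.getVert 1) b := by
            have := p.adj_getVert_succ (i := 1) (by omega)
            rw [show (1 : ℕ) + 1 = p.length by omega, p.getVert_length] at this
            exact this
          rw [Set.mem_setOf_eq, SimpleGraph.dist_comm]
          exact le_of_eq (SimpleGraph.dist_eq_one_iff_adj.mpr hadj))
    refine ⟨c, fun u hu => ?_⟩
    have hcu : c ∈ gBall G u 1 := by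
      simp only [Set.mem_iInter] at hc
      exact hc (u, 1) ⟨u, rfl⟩
    have h1 : G.dist u c ≤ 1 := hcu
    have h0 : 0 < G.dist u c := hconn.pos_dist_of_ne hu
    have : G.dist c u = 1 := by rw [SimpleGraph.dist_comm]; omega
    exact SimpleGraph.dist_eq_one_iff_adj.mp this
  · rintro ⟨v, hv⟩
    refine Finset.sup_le fun a _ => Finset.sup_le fun b _ => ?_
    have h1 : G.dist a v ≤ 1 := by
      rcases eq_or_ne a v with rfl | h
      · simp [SimpleGraph.dist_self]
      · exact le_of_eq (SimpleGraph.dist_eq_one_iff_adj.mpr ((hv a h).symm))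
    have h2 : G.dist v b ≤ 1 := by
      rcases eq_or_ne b v with rfl | h
      · simp [SimpleGraph.dist_self]
      · exact le_of_eq (SimpleGraph.dist_eq_one_iff_adj.mpr (hv b h))
    calc G.dist a b ≤ G.dist a v + G.dist v b := hconn.dist_triangle
      _ ≤ 2 := by omega
end

section
/- Let G be a finite connected C4-free Helly graph with radius r, let u and w be mutually far apart vertices (i.e., e(u) = e(w) = dist(u,w)) such that dist(u,w) = diam(G) − 2 = 2r − 3, and let A = L(w, r−2, u). Then a pair of vertices (x,y) is a diametral pair of G if and only if dist(x,A) = dist(y,A) = r − 1, Pr(x,A) ∩ Pr(y,A) = ∅, and dist(y,u) = dist(y,w) = dist(x,u) = dist(x,w) = 2r − 3. -/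
open SimpleGraph

variable {V : Type*}

/-! ### Auxiliary lemmas -/

section Aux

variable {G : SimpleGraph V}

private lemma st12_getVert_nil {G : SimpleGraph V} (a : V) (i : ℕ) :
    (SimpleGraph.Walk.nil : G.Walk a a).getVert i = a := rfl

private lemma st12_dist_getVert_le (hconn : G.Connected) :
    ∀ {a b : V} (W : G.Walk a b) (i : ℕ), G.dist a (W.getVert i) ≤ i := by
  intro a b W
  induction W with
  | nil =>
    intro i
    rw [st12_getVert_nil, SimpleGraph.dist_self]
    exact Nat.zero_le _
  | @cons a c b h W ih =>
    intro i
    cases i with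
    | zero =>
      rw [SimpleGraph.Walk.getVert_zero, SimpleGraph.dist_self]
    | succ i =>
      rw [SimpleGraph.Walk.getVert_cons_succ]
      have h1 : G.dist a c = 1 := SimpleGraph.dist_eq_one_iff_adj.mpr h
      have h2 := ih i
      have h3 := hconn.dist_triangle (u := a) (v := c) (w := W.getVert i)
      omega

private lemma st12_dist_getVert_to_end :
    ∀ {a b : V} (W : G.Walk a b) (i : ℕ), G.dist (W.getVert i) b ≤ W.length - i := by
  intro a b W
  induction W with
  | nil =>
    intro i
    rw [st12_getVert_nil, SimpleGraph.dist_self]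
    exact Nat.zero_le _
  | @cons a c b h W ih =>
    intro i
    cases i with
    | zero =>
      rw [SimpleGraph.Walk.getVert_zero]
      have h1 := SimpleGraph.dist_le (SimpleGraph.Walk.cons h W)
      simp only [SimpleGraph.Walk.length_cons] at h1 ⊢
      omega
    | succ i =>
      rw [SimpleGraph.Walk.getVert_cons_succ]
      have h1 := ih i
      simp only [SimpleGraph.Walk.length_cons]
      omega

private lemma st12_exists_between (hconn : G.Connected) (a b : V) (p q : ℕ)
    (h : G.dist a b ≤ p + q) : ∃ z, G.dist a z ≤ p ∧ G.dist z b ≤ q := by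
  obtain ⟨W, hW⟩ := hconn.exists_walk_length_eq_dist a b
  refine ⟨W.getVert (min p W.length), ?_, ?_⟩
  · exact (st12_dist_getVert_le hconn W _).trans (Nat.min_le_left _ _)
  · have h2 := st12_dist_getVert_to_end W (min p W.length)
    have hm : min p W.length ≤ p := Nat.min_le_left _ _
    have hm2 : min p W.length ≤ W.length := Nat.min_le_right _ _
    rcases Nat.le_total p W.length with hc | hc
    · rw [Nat.min_eq_left hc] at h2 ⊢
      omega
    · rw [Nat.min_eq_right hc] at h2 ⊢
      rw [SimpleGraph.Walk.getVert_length]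
      simp [SimpleGraph.dist_self]

private lemma st12_ball_inter (hconn : G.Connected) (x y : V) (px py : ℕ)
    (h : G.dist x y ≤ px + py) : (gBall G x px ∩ gBall G y py).Nonempty := by
  obtain ⟨z, h1, h2⟩ := st12_exists_between hconn x y px py h
  refine ⟨z, h1, ?_⟩
  show G.dist y z ≤ py
  rw [SimpleGraph.dist_comm]
  exact h2

private lemma helly_four (hconn : G.Connected) (hH : IsHelly G)
    (a b c d : V) (p q s t : ℕ)
    (hab : G.dist a b ≤ p + q) (hac : G.dist a c ≤ p + s) (had : G.dist a d ≤ p + t)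
    (hbc : G.dist b c ≤ q + s) (hbd : G.dist b d ≤ q + t) (hcd : G.dist c d ≤ s + t) :
    ∃ z, G.dist a z ≤ p ∧ G.dist b z ≤ q ∧ G.dist c z ≤ s ∧ G.dist d z ≤ t := by
  set F : Set (V × ℕ) := {(a, p), (b, q), (c, s), (d, t)} with hF
  have hne : F.Nonempty := ⟨(a, p), by simp [hF]⟩
  have hpair : ∀ P ∈ F, ∀ Q ∈ F, (gBall G P.1 P.2 ∩ gBall G Q.1 Q.2).Nonempty := by
    intro P hP Q hQ
    simp only [hF, Set.mem_insert_iff, Set.mem_singleton_iff] at hP hQ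
    rcases hP with rfl | rfl | rfl | rfl <;> rcases hQ with rfl | rfl | rfl | rfl <;>
      dsimp only <;> apply st12_ball_inter hconn <;>
      first
        | (simp [SimpleGraph.dist_self])
        | omega
        | (rw [SimpleGraph.dist_comm]; omega)
  obtain ⟨z, hz⟩ := hH F hne hpair
  have hmem : ∀ P ∈ F, z ∈ gBall G P.1 P.2 := by
    intro P hP
    exact Set.mem_iInter₂.mp hz P hP
  refine ⟨z, ?_, ?_, ?_, ?_⟩
  · exact hmem (a, p) (by simp [hF])
  · exact hmem (b, q) (by simp [hF])
  · exact hmem (c, s) (by simp [hF])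
  · exact hmem (d, t) (by simp [hF])

/-- Gate lemma: any vertex has a "gate" in the slice at prescribed distance. -/
private lemma slice_gate (hconn : G.Connected) (hH : IsHelly G)
    (w u v : V) (k m τ : ℕ) (hd : G.dist w u = k + m)
    (h1 : G.dist w v ≤ k + τ) (h2 : G.dist u v ≤ m + τ) :
    ∃ z ∈ gslice G w k u, G.dist v z ≤ τ := by
  obtain ⟨z, hwz, huz, hvz, -⟩ :=
    helly_four hconn hH w u v v k m τ τ
      (by omega) h1 (by omega) h2 (by omega) (by simp [SimpleGraph.dist_self])
  have htri := hconn.dist_triangle (u := w) (v := z) (w := u)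
  have hzu : G.dist z u = G.dist u z := SimpleGraph.dist_comm ..
  have hwz' : G.dist w z = k := by omega
  refine ⟨z, ⟨hwz', by omega⟩, hvz⟩

/-- In a `C₄`-free Helly graph, every slice of the interval between two
vertices is a clique. -/
private lemma slice_clique (hconn : G.Connected) (hH : IsHelly G) (hC4 : C4Free G)
    (w u : V) (k : ℕ) (hk1 : 1 ≤ k) (hk2 : k + 1 ≤ G.dist w u)
    {p q : V} (hp : p ∈ gslice G w k u) (hq : q ∈ gslice G w k u) :
    G.dist p q ≤ 1 := by
  obtain ⟨hwp, hpu⟩ := hp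
  obtain ⟨hwq, hqu⟩ := hq
  -- decompose k and the complementary distance
  obtain ⟨k₀, rfl⟩ : ∃ k₀, k = k₀ + 1 := ⟨k - 1, by omega⟩
  obtain ⟨m, hm⟩ : ∃ m, G.dist w u = (k₀ + 1) + (m + 1) := by
    refine ⟨G.dist w u - k₀ - 2, ?_⟩
    omega
  have hpu' : G.dist p u = m + 1 := by omega
  have hqu' : G.dist q u = m + 1 := by omega
  -- main claim by strong induction on the distance
  have main : ∀ j : ℕ, ∀ p q : V,
      G.dist w p = k₀ + 1 → G.dist p u = m + 1 →
      G.dist w q = k₀ + 1 → G.dist q u = m + 1 →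
      G.dist p q = j → G.dist p q ≤ 1 := by
    intro j
    induction j using Nat.strong_induction_on with
    | _ j IH =>
      intro p q hwp hpu hwq hqu hj
      by_cases hj1 : j ≤ 1
      · omega
      -- j ≥ 2 : first reduce to j = 2
      have hpq2 : G.dist p q = 2 := by
        obtain ⟨z, hpz, hqz, huz, hwz⟩ :=
          helly_four hconn hH p q u w 1 (j - 1) (m + 1) (k₀ + 1)
            (by omega)
            (by omega)
            (by rw [SimpleGraph.dist_comm]; omega)
            (by omega)
            (by rw [SimpleGraph.dist_comm]; omega)
            (by rw [SimpleGraph.dist_comm]; omega)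
        have htri := hconn.dist_triangle (u := w) (v := z) (w := u)
        have hc1 : G.dist z u = G.dist u z := SimpleGraph.dist_comm ..
        have hwz' : G.dist w z = k₀ + 1 := by omega
        have hzu' : G.dist z u = m + 1 := by omega
        have hzq : G.dist z q = G.dist q z := SimpleGraph.dist_comm ..
        have hlt : G.dist z q < j := by omega
        have hz1 : G.dist z q ≤ 1 :=
          IH (G.dist z q) hlt z q hwz' hzu' hwq hqu rfl
        have htri2 := hconn.dist_triangle (u := p) (v := z) (w := q)
        omega
      -- now refute distance exactly 2 using C4-freeness
      exfalso
      -- z₁ : common neighbour of p, q closer to u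
      obtain ⟨z₁, hpz₁, hqz₁, huz₁, -⟩ :=
        helly_four hconn hH p q u u 1 1 m m
          (by omega)
          (by omega)
          (by omega)
          (by omega)
          (by omega)
          (by simp [SimpleGraph.dist_self])
      -- z₂ : common neighbour of p, q closer to w
      obtain ⟨z₂, hpz₂, hqz₂, hwz₂, -⟩ :=
        helly_four hconn hH p q w w 1 1 k₀ k₀
          (by omega)
          (by rw [SimpleGraph.dist_comm]; omega)
          (by rw [SimpleGraph.dist_comm]; omega)
          (by rw [SimpleGraph.dist_comm]; omega)
          (by rw [SimpleGraph.dist_comm]; omega)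
          (by simp [SimpleGraph.dist_self])
      -- distinctness
      have hz₁p : z₁ ≠ p := by
        rintro rfl
        have : G.dist u z₁ = G.dist z₁ u := SimpleGraph.dist_comm ..
        omega
      have hz₁q : z₁ ≠ q := by
        rintro rfl
        have : G.dist u z₁ = G.dist z₁ u := SimpleGraph.dist_comm ..
        omega
      have hz₂p : z₂ ≠ p := by
        rintro rfl
        omega
      have hz₂q : z₂ ≠ q := by
        rintro rfl
        omega
      have hpqne : p ≠ q := by
        rintro rfl
        rw [SimpleGraph.dist_self] at hpq2
        omega
      -- adjacency from distance one
      have hadj : ∀ {x y : V}, G.dist x y ≤ 1 → x ≠ y → G.Adj x y := by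
        intro x y hle hne
        have hpos := hconn.pos_dist_of_ne hne
        exact SimpleGraph.dist_eq_one_iff_adj.mp (by omega)
      have hApz₁ : G.Adj p z₁ := hadj hpz₁ (fun h => hz₁p h.symm)
      have hAqz₁ : G.Adj q z₁ := hadj hqz₁ (fun h => hz₁q h.symm)
      have hApz₂ : G.Adj p z₂ := hadj hpz₂ (fun h => hz₂p h.symm)
      have hAqz₂ : G.Adj q z₂ := hadj hqz₂ (fun h => hz₂q h.symm)
      have hnApq : ¬ G.Adj p q := by
        intro hA
        have := SimpleGraph.dist_eq_one_iff_adj.mpr hA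
        omega
      -- z₁ and z₂ are distinct and non-adjacent
      have hz₁z₂ : z₁ ≠ z₂ := by
        rintro rfl
        have h1 := hconn.dist_triangle (u := w) (v := z₁) (w := u)
        have h2 : G.dist z₁ u = G.dist u z₁ := SimpleGraph.dist_comm ..
        omega
      have hnAz₁z₂ : ¬ G.Adj z₁ z₂ := by
        intro hA
        have h1 := SimpleGraph.dist_eq_one_iff_adj.mpr hA
        have h2 := hconn.dist_triangle (u := w) (v := z₂) (w := z₁)
        have h3 := hconn.dist_triangle (u := w) (v := z₁) (w := u)
        have h4 : G.dist z₂ z₁ = G.dist z₁ z₂ := SimpleGraph.dist_comm ..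
        have h5 : G.dist z₁ u = G.dist u z₁ := SimpleGraph.dist_comm ..
        omega
      exact hC4 ⟨z₁, p, z₂, q, fun h => hz₁p h, hz₁z₂, fun h => hz₁q h,
        fun h => hz₂p h.symm, hpqne, fun h => hz₂q h,
        hApz₁.symm, hApz₂, hAqz₂.symm, hAqz₁, hnAz₁z₂, hnApq⟩
  exact main (G.dist p q) p q hwp hpu' hwq hqu' rfl

end Aux

/-- In a finite connected C4-free Helly graph of radius `r`, if `u, w`
are mutually far apart with `dist(u,w) = diam(G) − 2 = 2r − 3` and
`A = L(w, r−2, u)`, then `(x,y)` is a diametral pair iff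
`dist(x,A) = dist(y,A) = r − 1`, `Pr(x,A) ∩ Pr(y,A) = ∅`, and
`dist(y,u) = dist(y,w) = dist(x,u) = dist(x,w) = 2r − 3`. -/
theorem stmt12 (G : SimpleGraph V) [Fintype V] (hconn : G.Connected) (hH : IsHelly G)
    (hC4 : C4Free G) (u w : V)
    (hu : ecc G u = G.dist u w) (hw : ecc G w = G.dist u w)
    (hd : G.dist u w + 2 = gdiam G) (hr : G.dist u w + 3 = 2 * grad G) :
    ∀ x y : V, G.dist x y = gdiam G ↔
      (distS G x (gslice G w (grad G - 2) u) = grad G - 1 ∧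
       distS G y (gslice G w (grad G - 2) u) = grad G - 1 ∧
       proj G x (gslice G w (grad G - 2) u) ∩ proj G y (gslice G w (grad G - 2) u) = ∅ ∧
       G.dist y u = 2 * grad G - 3 ∧ G.dist y w = 2 * grad G - 3 ∧
       G.dist x u = 2 * grad G - 3 ∧ G.dist x w = 2 * grad G - 3) := by
  -- basic quantities
  have hgle : grad G ≤ ecc G u := Nat.sInf_le ⟨u, rfl⟩
  obtain ⟨n, hn⟩ : ∃ n, grad G = n + 3 := ⟨grad G - 3, by omega⟩
  have hduw : G.dist u w = 2 * n + 3 := by omega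
  have hdwu : G.dist w u = 2 * n + 3 := by rw [SimpleGraph.dist_comm]; omega
  have hdiam : gdiam G = 2 * n + 5 := by omega
  have hg2 : grad G - 2 = n + 1 := by omega
  have hg1 : grad G - 1 = n + 2 := by omega
  have hg3 : 2 * grad G - 3 = 2 * n + 3 := by omega
  -- eccentricity bounds
  have hbu : ∀ v : V, G.dist u v ≤ 2 * n + 3 := by
    intro v
    have h1 : G.dist u v ≤ ecc G u := Finset.le_sup (Finset.mem_univ v)
    omega
  have hbw : ∀ v : V, G.dist w v ≤ 2 * n + 3 := by
    intro v
    have h1 : G.dist w v ≤ ecc G w := Finset.le_sup (Finset.mem_univ v)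
    omega
  -- slices A and A'
  set A : Set V := gslice G w (n + 1) u with hA
  set A' : Set V := gslice G u (n + 1) w with hA'
  -- gates into the slices
  have hgateA : ∀ v : V, ∃ z ∈ A, G.dist v z ≤ n + 2 := by
    intro v
    exact slice_gate hconn hH w u v (n + 1) (n + 2) (n + 2) (by omega)
      (by have := hbw v; omega) (by have := hbu v; omega)
  have hgateA' : ∀ v : V, ∃ z ∈ A', G.dist v z ≤ n + 2 := by
    intro v
    exact slice_gate hconn hH u w v (n + 1) (n + 2) (n + 2) (by omega)
      (by have := hbu v; omega) (by have := hbw v; omega)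
  -- the slices are cliques
  have hclA : ∀ p ∈ A, ∀ q ∈ A, G.dist p q ≤ 1 := by
    intro p hp q hq
    exact slice_clique hconn hH hC4 w u (n + 1) (by omega) (by omega) hp hq
  have hclA' : ∀ p ∈ A', ∀ q ∈ A', G.dist p q ≤ 1 := by
    intro p hp q hq
    exact slice_clique hconn hH hC4 u w (n + 1) (by omega) (by omega) hp hq
  -- the core contradiction: no diametral vertex is within n+1 of A (resp. A')
  have core : ∀ (S : Set V), (∀ p ∈ S, ∀ q ∈ S, G.dist p q ≤ 1) →
      (∀ v : V, ∃ z ∈ S, G.dist v z ≤ n + 2) →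
      ∀ x y : V, G.dist x y = 2 * n + 5 →
      ∀ m ∈ S, G.dist x m ≤ n + 1 → False := by
    intro S hcl hgate x y hxy m hm hxm
    obtain ⟨m', hm', hym'⟩ := hgate y
    have h1 : G.dist m m' ≤ 1 := hcl m hm m' hm'
    have h2 := hconn.dist_triangle (u := x) (v := m) (w := y)
    have h3 := hconn.dist_triangle (u := m) (v := m') (w := y)
    have h4 : G.dist m' y = G.dist y m' := SimpleGraph.dist_comm ..
    omega
  rw [hg1, hg2, hg3]
  rw [← hA]
  intro x y
  rw [hdiam]
  constructor
  · -- forward direction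
    intro hxy
    have hyx : G.dist y x = 2 * n + 5 := by rw [SimpleGraph.dist_comm]; omega
    -- the four distance equalities
    have hxw : G.dist x w = 2 * n + 3 := by
      by_contra hcon
      have hle : G.dist w x ≤ 2 * n + 2 := by
        have := hbw x
        have : G.dist x w = G.dist w x := SimpleGraph.dist_comm ..
        omega
      obtain ⟨z, hzA, hxz⟩ :=
        slice_gate hconn hH w u x (n + 1) (n + 2) (n + 1) (by omega)
          (by omega) (by have := hbu x; omega)
      exact core A hclA hgateA x y hxy z hzA hxz
    have hyw : G.dist y w = 2 * n + 3 := by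
      by_contra hcon
      have hle : G.dist w y ≤ 2 * n + 2 := by
        have := hbw y
        have : G.dist y w = G.dist w y := SimpleGraph.dist_comm ..
        omega
      obtain ⟨z, hzA, hyz⟩ :=
        slice_gate hconn hH w u y (n + 1) (n + 2) (n + 1) (by omega)
          (by omega) (by have := hbu y; omega)
      exact core A hclA hgateA y x hyx z hzA hyz
    have hxu : G.dist x u = 2 * n + 3 := by
      by_contra hcon
      have hle : G.dist u x ≤ 2 * n + 2 := by
        have := hbu x
        have : G.dist x u = G.dist u x := SimpleGraph.dist_comm ..
        omega
      obtain ⟨z, hzA, hxz⟩ :=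
        slice_gate hconn hH u w x (n + 1) (n + 2) (n + 1) (by omega)
          (by omega) (by have := hbw x; omega)
      exact core A' hclA' hgateA' x y hxy z hzA hxz
    have hyu : G.dist y u = 2 * n + 3 := by
      by_contra hcon
      have hle : G.dist u y ≤ 2 * n + 2 := by
        have := hbu y
        have : G.dist y u = G.dist u y := SimpleGraph.dist_comm ..
        omega
      obtain ⟨z, hzA, hyz⟩ :=
        slice_gate hconn hH u w y (n + 1) (n + 2) (n + 1) (by omega)
          (by omega) (by have := hbw y; omega)
      exact core A' hclA' hgateA' y x hyx z hzA hyz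
    -- distances to the slice A
    have hSx : distS G x A = n + 2 := by
      obtain ⟨z, hzA, hxz⟩ := hgateA x
      have hne : (G.dist x '' A).Nonempty := ⟨G.dist x z, z, hzA, rfl⟩
      have hub : distS G x A ≤ n + 2 := by
        have h1 : distS G x A ≤ G.dist x z := Nat.sInf_le ⟨z, hzA, rfl⟩
        omega
      have hmem := Nat.sInf_mem hne
      obtain ⟨m, hmA, hmd⟩ := hmem
      by_contra hcon
      have hxm : G.dist x m ≤ n + 1 := by
        have : distS G x A ≤ n + 1 := by
          unfold distS at hub hcon ⊢
          omega
        unfold distS at this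
        omega
      exact core A hclA hgateA x y hxy m hmA hxm
    have hSy : distS G y A = n + 2 := by
      obtain ⟨z, hzA, hyz⟩ := hgateA y
      have hne : (G.dist y '' A).Nonempty := ⟨G.dist y z, z, hzA, rfl⟩
      have hub : distS G y A ≤ n + 2 := by
        have h1 : distS G y A ≤ G.dist y z := Nat.sInf_le ⟨z, hzA, rfl⟩
        omega
      have hmem := Nat.sInf_mem hne
      obtain ⟨m, hmA, hmd⟩ := hmem
      by_contra hcon
      have hym : G.dist y m ≤ n + 1 := by
        have : distS G y A ≤ n + 1 := by
          unfold distS at hub hcon ⊢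
          omega
        unfold distS at this
        omega
      exact core A hclA hgateA y x hyx m hmA hym
    refine ⟨hSx, hSy, ?_, hyu, hyw, hxu, hxw⟩
    -- disjoint projections
    rw [Set.eq_empty_iff_forall_notMem]
    rintro p ⟨⟨hpA, hpx⟩, ⟨hpA', hpy⟩⟩
    rw [hSx] at hpx
    rw [hSy] at hpy
    have h1 := hconn.dist_triangle (u := x) (v := p) (w := y)
    have h2 : G.dist p y = G.dist y p := SimpleGraph.dist_comm ..
    omega
  · -- backward direction
    rintro ⟨hSx, hSy, hdisj, hyu, hyw, hxu, hxw⟩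
    have hub : G.dist x y ≤ 2 * n + 5 := by
      have h1 : G.dist x y ≤ ecc G x := Finset.le_sup (Finset.mem_univ y)
      have h2 : ecc G x ≤ gdiam G := Finset.le_sup (Finset.mem_univ x)
      omega
    by_contra hcon
    have hxy : G.dist x y ≤ 2 * n + 4 := by omega
    obtain ⟨z, hxz, hyz, huz, hwz⟩ :=
      helly_four hconn hH x y u w (n + 2) (n + 2) (n + 2) (n + 1)
        (by omega) (by omega) (by omega) (by omega) (by omega) (by omega)
    -- z lies in A
    have htri := hconn.dist_triangle (u := w) (v := z) (w := u)
    have hc1 : G.dist z u = G.dist u z := SimpleGraph.dist_comm ..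
    have hzA : z ∈ A := ⟨by omega, by omega⟩
    -- z is in both projections
    have hxzA : G.dist x z = n + 2 := by
      have h1 : distS G x A ≤ G.dist x z := Nat.sInf_le ⟨z, hzA, rfl⟩
      omega
    have hyzA : G.dist y z = n + 2 := by
      have h1 : distS G y A ≤ G.dist y z := Nat.sInf_le ⟨z, hzA, rfl⟩
      omega
    have hzproj : z ∈ proj G x A ∩ proj G y A :=
      ⟨⟨hzA, by rw [hxzA, hSx]⟩, ⟨hzA, by rw [hyzA, hSy]⟩⟩
    rw [hdisj] at hzproj
    exact hzproj
end
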